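/- arXiv:1909.04650 — 6 statements merged into one kernel-verified Lean document; each statement's English description precedes it below -/
import Mathlib

section
/- Let w, z ∈ P_n, d ≥ 1, and 0 ≤ l < n. If the partitioning problem BP(d,z;w) is (l+1)-feasible but not l-feasible, then z_{l+1} < d·w_{l+1}. -/
open MvPolynomial

/-- `PartitionOn n x` : `x` is a weakly decreasing sequence of naturals (0-based
indexing, so `x 0` is the first part `x_1`) vanishing from index `n` on; this
encodes a partition in `P_n ⊆ ℤ^n_{≥0}`. -/
def PartitionOn (n : ℕ) (x : ℕ → ℕ) : Prop :=
  (∀ i j : ℕ, i ≤ j → x j ≤ x i) ∧ ∀ i : ℕ, n ≤ i → x i = 0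

/-- A partition: a weakly decreasing, eventually zero sequence of naturals. -/
def IsPartitionF (x : ℕ → ℕ) : Prop :=
  (∀ i j : ℕ, i ≤ j → x j ≤ x i) ∧ ∃ n : ℕ, ∀ i : ℕ, n ≤ i → x i = 0

/-- The conjugate partition (1-based index): `conj x i = #{j : x_j ≥ i}`. -/
noncomputable def conj (x : ℕ → ℕ) (i : ℕ) : ℕ :=
  Set.ncard { j : ℕ | i ≤ x j }

/-- The truncation `x(c)`, whose parts are `min (x i) c`. -/
def trunc (x : ℕ → ℕ) (c : ℕ) : ℕ → ℕ := fun i => min (x i) c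

/-- The rectangular partition `(b^a)`: `a` parts equal to `b`. -/
def rect (a b : ℕ) : ℕ → ℕ := fun i => if i < a then b else 0

/-- The size `|x| = x_1 + ⋯ + x_n` of a partition supported in the first `n` indices. -/
def psize (n : ℕ) (x : ℕ → ℕ) : ℕ := ∑ i ∈ Finset.range n, x i

/-- The set `Z(X)` : pairs `(z, l)` with `z ∈ P_n`, `l ≥ 0` such that, writing `c = z_1`:
(1) there is `x ∈ X` with `x(c) ≤ z` and `x'_{c+1} ≤ l+1`, and
(2) every `x ∈ X` with `x(c) ≤ z` and `x'_{c+1} ≤ l+1` has `x'_{c+1} = l+1`. -/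
noncomputable def ZX (n : ℕ) (X : Set (ℕ → ℕ)) : Set ((ℕ → ℕ) × ℕ) :=
  { zl | PartitionOn n zl.1 ∧
    (∃ x ∈ X, trunc x (zl.1 0) ≤ zl.1 ∧ conj x (zl.1 0 + 1) ≤ zl.2 + 1) ∧
    ∀ x ∈ X, trunc x (zl.1 0) ≤ zl.1 → conj x (zl.1 0 + 1) ≤ zl.2 + 1 →
      conj x (zl.1 0 + 1) = zl.2 + 1 }

/-- The monomial `e^u = e_1^{u_1} ⋯ e_n^{u_n}` in `S = k[e_1, …, e_n]`. -/
noncomputable def mon (k : Type*) [Field k] (n : ℕ) (u : ℕ → ℕ) : MvPolynomial (Fin n) k :=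
  ∏ i : Fin n, (X i : MvPolynomial (Fin n) k) ^ u (i : ℕ)

/-- The ideal `I_x` generated by the `S_n`-orbit of the monomial `e^x`. -/
noncomputable def Ipart (k : Type*) [Field k] (n : ℕ) (x : ℕ → ℕ) :
    Ideal (MvPolynomial (Fin n) k) :=
  Ideal.span { f | ∃ σ : Equiv.Perm (Fin n),
    f = ∏ i : Fin n, (X i : MvPolynomial (Fin n) k) ^ x ((σ i : Fin n) : ℕ) }

/-- The ideal `I_X = Σ_{x ∈ X} I_x`. -/
noncomputable def IXset (k : Type*) [Field k] (n : ℕ) (Xs : Set (ℕ → ℕ)) :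
    Ideal (MvPolynomial (Fin n) k) :=
  ⨆ x ∈ Xs, Ipart k n x

/-- `succ(z,l) = {x ∈ P_n : x ≥ z and x_i > z_i for some i > l}` (1-based `i > l`
corresponds to 0-based index `≥ l`). -/
def succSet (n l : ℕ) (z : ℕ → ℕ) : Set (ℕ → ℕ) :=
  { x | PartitionOn n x ∧ (∀ i, z i ≤ x i) ∧ ∃ i, l ≤ i ∧ z i < x i }

/-- `Y_{z,l} = {((z_1+1)^{l+1})} ∪ {((z_i+1)^i) : l+1 < i ≤ n, z_{i-1} > z_i}`
(here `i = m+2` in 1-based indexing). -/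
def Yset (n : ℕ) (z : ℕ → ℕ) (l : ℕ) : Set (ℕ → ℕ) :=
  {rect (l+1) (z 0 + 1)} ∪
    { y | ∃ m : ℕ, l ≤ m ∧ m + 2 ≤ n ∧ z (m+1) < z m ∧ y = rect (m+2) (z (m+1) + 1) }

/-- `Y'_{z,l} = {((z_i+1)^i) : l+1 < i ≤ n, z_{i-1} > z_i}`. -/
def Y'set (n : ℕ) (z : ℕ → ℕ) (l : ℕ) : Set (ℕ → ℕ) :=
  { y | ∃ m : ℕ, l ≤ m ∧ m + 2 ≤ n ∧ z (m+1) < z m ∧ y = rect (m+2) (z (m+1) + 1) }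

/-- An ideal `I` is symmetric shifted if for every monomial `e^x ∈ I` with `x ∈ P_n`
and every `1 < k ≤ n` (0-based `0 < j < n`) with `x_1 > x_k`, one has `e^x · e_k/e_1 ∈ I`. -/
def SymShifted (k : Type*) [Field k] (n : ℕ) (I : Ideal (MvPolynomial (Fin n) k)) : Prop :=
  ∀ x : ℕ → ℕ, PartitionOn n x → mon k n x ∈ I →
    ∀ j : ℕ, 0 < j → j < n → x j < x 0 →
      mon k n (fun i => if i = 0 then x 0 - 1 else if i = j then x j + 1 else x i) ∈ I

/-- The partitioning problem `BP(d, C; w)` is `r`-feasible: the multiset of `d` copies of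
each of `w_1, …, w_n` (balls indexed by `Fin d × Fin n`, ball `(j,i)` of weight `w_i`)
can be distributed into bins `B_1, …, B_n` of exactly `d` balls each so that
`w(B_i) ≤ C_i` for all `i = r+1, …, n` (0-based bins `≥ r`). -/
def RFeasible (n d r : ℕ) (C w : ℕ → ℕ) : Prop :=
  ∃ A : Fin d × Fin n → Fin n,
    (∀ b : Fin n, (Finset.univ.filter fun p => A p = b).card = d) ∧
    ∀ b : Fin n, r ≤ (b : ℕ) →
      (∑ p ∈ Finset.univ.filter (fun p => A p = b), w ((p.2 : Fin n) : ℕ)) ≤ C (b : ℕ)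

/-- `X_w^d = {x ∈ P_n : x = σ_1(w) + ⋯ + σ_d(w) for some σ_1, …, σ_d ∈ S_n}`. -/
def XwPow (n d : ℕ) (w : ℕ → ℕ) : Set (ℕ → ℕ) :=
  { x | PartitionOn n x ∧ ∃ σ : Fin d → Equiv.Perm (Fin n),
      ∀ i : Fin n, x (i : ℕ) = ∑ j : Fin d, w ((σ j i : Fin n) : ℕ) }

/-- `Y_n`: the elements of `Y` with at most `n` nonzero parts, regarded in `P_n`. -/
def restr (Y : Set (ℕ → ℕ)) (n : ℕ) : Set (ℕ → ℕ) :=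
  { x ∈ Y | ∀ i, n ≤ i → x i = 0 }

theorem stmt_13 (n d l : ℕ) (hd : 1 ≤ d) (hl : l < n)
    (w z : ℕ → ℕ) (hw : PartitionOn n w) (hz : PartitionOn n z)
    (h1 : RFeasible n d (l + 1) z w) (h2 : ¬ RFeasible n d l z w) :
    z l < d * w l := by
  by_contra hcon
  push_neg at hcon
  apply h2
  classical
  obtain ⟨A, hAcard, hAcons⟩ := h1
  set bl : Fin n := ⟨l, hl⟩ with hbl
  set S : Finset (Fin d × Fin n) := Finset.univ.filter fun p => (A p : ℕ) ≤ l with hS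
  set Hv : Finset (Fin d × Fin n) := Finset.univ.filter fun p => ((p.2 : Fin n) : ℕ) < l with hH
  -- card of the bin index set {b ≤ l}
  have hfin : (Finset.univ.filter fun b : Fin n => (b : ℕ) ≤ l).card = l + 1 := by
    rw [show l + 1 = (Finset.univ : Finset (Fin (l+1))).card by simp]
    refine Finset.card_nbij'
      (fun b => (⟨(b : ℕ) % (l+1), Nat.mod_lt _ (Nat.succ_pos l)⟩ : Fin (l+1)))
      (fun b => (⟨(b : ℕ), by omega⟩ : Fin n)) ?_ ?_ ?_ ?_
    · intro b hb; simp
    · intro b _; simp only [Finset.mem_coe, Finset.mem_filter, Finset.mem_univ, true_and]; omega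
    · intro b hb
      simp only [Finset.mem_coe, Finset.mem_filter, Finset.mem_univ, true_and] at hb
      exact Fin.ext (by simp [Nat.mod_eq_of_lt (by omega : (b:ℕ) < l + 1)])
    · intro b hb
      exact Fin.ext (by simp [Nat.mod_eq_of_lt b.isLt])
  have hScard : S.card = d * (l + 1) := by
    have h1' : S.card = ∑ b ∈ Finset.univ.filter (fun b : Fin n => (b : ℕ) ≤ l),
        (S.filter fun p => A p = b).card := by
      apply Finset.card_eq_sum_card_fiberwise
      intro p hp
      simp only [hS, Finset.mem_coe, Finset.mem_filter, Finset.mem_univ, true_and] at hp ⊢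
      exact hp
    rw [h1', Finset.sum_congr rfl (fun b hb => ?_), Finset.sum_const, hfin, smul_eq_mul,
      Nat.mul_comm]
    simp only [Finset.mem_filter, Finset.mem_univ, true_and] at hb
    rw [show S.filter (fun p => A p = b) = Finset.univ.filter (fun p => A p = b) from ?_,
      hAcard b]
    ext p
    simp only [hS, Finset.filter_filter, Finset.mem_filter, Finset.mem_univ, true_and]
    constructor
    · rintro ⟨_, h⟩; exact h
    · intro h; exact ⟨h ▸ hb, h⟩
  have hHcard : Hv.card = d * l := by
    rcases Nat.eq_zero_or_pos l with hl0 | hl0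
    · subst hl0; simp [hH]
    rw [show d * l = (Finset.univ : Finset (Fin d × Fin l)).card by simp]
    refine Finset.card_nbij'
      (fun p => ((p.1, ⟨(p.2 : ℕ) % l, Nat.mod_lt _ hl0⟩) : Fin d × Fin l))
      (fun q => ((q.1, ⟨(q.2 : ℕ), lt_trans q.2.isLt hl⟩) : Fin d × Fin n)) ?_ ?_ ?_ ?_
    · intro p hp; simp
    · intro q _
      simp only [hH, Finset.mem_coe, Finset.mem_filter, Finset.mem_univ, true_and]
      exact q.2.isLt
    · intro p hp
      simp only [hH, Finset.mem_coe, Finset.mem_filter, Finset.mem_univ, true_and] at hp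
      exact Prod.ext rfl (Fin.ext (by simp [Nat.mod_eq_of_lt hp]))
    · intro q _
      exact Prod.ext rfl (Fin.ext (by simp [Nat.mod_eq_of_lt q.2.isLt]))
  -- choose T : d light balls assigned to bins 0..l
  have hdle : d ≤ (S \ Hv).card := by
    have h5 := Finset.le_card_sdiff Hv S
    have h6 : d * (l + 1) = d * l + d := by ring
    omega
  obtain ⟨T, hTsub, hTcard⟩ := Finset.exists_subset_card_eq hdle
  have hT : ∀ p ∈ T, (A p : ℕ) ≤ l ∧ l ≤ ((p.2 : Fin n) : ℕ) := by
    intro p hp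
    have := hTsub hp
    simp only [hS, hH, Finset.mem_sdiff, Finset.mem_filter, Finset.mem_univ, true_and] at this
    exact ⟨this.1, by omega⟩
  set Tl : Finset (Fin d × Fin n) := Finset.univ.filter (fun p => A p = bl) with hTldef
  have hTlcard : Tl.card = d := hAcard bl
  have hcards : (Tl \ T).card = (T \ Tl).card :=
    Finset.card_sdiff_comm (by rw [hTlcard, hTcard])
  set ψ := Finset.equivOfCardEq hcards with hψ
  set A' : Fin d × Fin n → Fin n := fun p =>
    if h : p ∈ Tl \ T then A (ψ ⟨p, h⟩) else if p ∈ T then bl else A p with hA'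
  have hψmem : ∀ (x : (Tl \ T : Finset _)), ((ψ x : Fin d × Fin n) ∈ T ∧
      (ψ x : Fin d × Fin n) ∉ Tl) := by
    intro x
    have := (ψ x).2
    simp only [Finset.mem_sdiff] at this
    exact this
  -- fiber over bl is T
  have hfl : ∀ p, A' p = bl ↔ p ∈ T := by
    intro p
    by_cases h : p ∈ Tl \ T
    · have hp' : p ∉ T := (Finset.mem_sdiff.mp h).2
      simp only [hA', dif_pos h]
      constructor
      · intro habs
        exact absurd (by
          simp only [hTldef, Finset.mem_filter, Finset.mem_univ, true_and]
          exact habs) ((hψmem ⟨p, h⟩).2)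
      · intro hpT; exact absurd hpT hp'
    · simp only [hA', dif_neg h]
      by_cases hpT : p ∈ T
      · simp [hpT]
      · simp only [if_neg hpT]
        constructor
        · intro habs
          exact absurd (Finset.mem_sdiff.mpr ⟨by
            simp only [hTldef, Finset.mem_filter, Finset.mem_univ, true_and]
            exact habs, hpT⟩) h
        · intro hpT'; exact absurd hpT' hpT
  -- fibers over bins b with l < b are unchanged
  have hfb : ∀ b : Fin n, l < (b : ℕ) → ∀ p, (A' p = b ↔ A p = b) := by
    intro b hb p
    have hbne : b ≠ bl := by
      intro h; rw [h] at hb; simp [hbl] at hb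
    by_cases h : p ∈ Tl \ T
    · have h1 : p ∈ Tl := (Finset.mem_sdiff.mp h).1
      have h2 : A p = bl := (Finset.mem_filter.mp h1).2
      have h3 : ((ψ ⟨p, h⟩ : Fin d × Fin n) ∈ T) := (hψmem ⟨p, h⟩).1
      have h4 : (A (ψ ⟨p, h⟩) : ℕ) ≤ l := (hT _ h3).1
      simp only [hA', dif_pos h]
      constructor
      · intro habs; rw [habs] at h4; omega
      · intro habs; exact absurd (habs.symm.trans h2) hbne
    · simp only [hA', dif_neg h]
      by_cases hpT : p ∈ T
      · have h4 : (A p : ℕ) ≤ l := (hT _ hpT).1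
        simp only [if_pos hpT]
        constructor
        · intro habs; exact absurd habs.symm hbne
        · intro habs; rw [habs] at h4; omega
      · simp [hpT]
  -- cardinalities of all fibers of A' are d
  have hcard' : ∀ b : Fin n, (Finset.univ.filter fun p => A' p = b).card = d := by
    intro b
    by_cases hbeq : b = bl
    · subst hbeq
      have hfeq : (Finset.univ.filter fun p => A' p = bl) = T := by
        ext p
        simp only [Finset.mem_filter, Finset.mem_univ, true_and]
        exact hfl p
      rw [hfeq]
      exact hTcard
    · refine Eq.trans ?_ (hAcard b)
      refine Finset.card_bij (fun p hp => if h : p ∈ Tl \ T then (ψ ⟨p, h⟩ : Fin d × Fin n) else p)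
        ?_ ?_ ?_
      · intro p hp
        simp only [Finset.mem_filter, Finset.mem_univ, true_and] at hp ⊢
        by_cases h : p ∈ Tl \ T
        · simp only [dif_pos h]
          simpa only [hA', dif_pos h] using hp
        · simp only [dif_neg h]
          have hpT : p ∉ T := by
            intro hpT
            rw [(hfl p).mpr hpT] at hp
            exact hbeq hp.symm  -- hp : bl = b? careful
          simpa only [hA', dif_neg h, if_neg hpT] using hp
      · intro p1 hp1 p2 hp2 heq
        have key : ∀ p (hp : p ∈ Finset.univ.filter fun q => A' q = b), p ∉ T := by
          intro p hp hpT
          simp only [Finset.mem_filter, Finset.mem_univ, true_and] at hp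
          rw [(hfl p).mpr hpT] at hp
          exact hbeq hp.symm
        by_cases h1 : p1 ∈ Tl \ T <;> by_cases h2 : p2 ∈ Tl \ T
        · simp only [dif_pos h1, dif_pos h2] at heq
          have := ψ.injective (Subtype.ext heq)
          exact congrArg Subtype.val this
        · simp only [dif_pos h1, dif_neg h2] at heq
          exact absurd (heq ▸ (hψmem ⟨p1, h1⟩).1) (key p2 hp2)
        · simp only [dif_neg h1, dif_pos h2] at heq
          exact absurd (heq.symm ▸ (hψmem ⟨p2, h2⟩).1) (key p1 hp1)
        · simp only [dif_neg h1, dif_neg h2] at heq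
          exact heq
      · intro q hq
        simp only [Finset.mem_filter, Finset.mem_univ, true_and] at hq
        have hqTl : q ∉ Tl := by
          intro h
          have := (Finset.mem_filter.mp h).2
          rw [this] at hq
          exact hbeq hq.symm  -- hq : bl = b
        by_cases hqT : q ∈ T
        · have hqTT : q ∈ T \ Tl := Finset.mem_sdiff.mpr ⟨hqT, hqTl⟩
          set p := ψ.symm ⟨q, hqTT⟩ with hp
          have hpmem : (p : Fin d × Fin n) ∈ Tl \ T := p.2
          refine ⟨(p : Fin d × Fin n), ?_, ?_⟩
          · simp only [Finset.mem_filter, Finset.mem_univ, true_and, hA', dif_pos hpmem]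
            have : ψ ⟨(p : Fin d × Fin n), hpmem⟩ = ⟨q, hqTT⟩ := by
              rw [show (⟨(p : Fin d × Fin n), hpmem⟩ : (Tl \ T : Finset _)) = p from
                Subtype.ext rfl]
              exact ψ.apply_symm_apply _
            rw [this]
            exact hq
          · simp only [dif_pos hpmem]
            have : ψ ⟨(p : Fin d × Fin n), hpmem⟩ = ⟨q, hqTT⟩ := by
              rw [show (⟨(p : Fin d × Fin n), hpmem⟩ : (Tl \ T : Finset _)) = p from
                Subtype.ext rfl]
              exact ψ.apply_symm_apply _
            rw [this]
        · have hqTlT : q ∉ Tl \ T := fun h => hqTl (Finset.mem_sdiff.mp h).1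
          refine ⟨q, ?_, ?_⟩
          · simp only [Finset.mem_filter, Finset.mem_univ, true_and, hA', dif_neg hqTlT,
              if_neg hqT]
            exact hq
          · simp only [dif_neg hqTlT]
  -- constraints
  refine ⟨A', hcard', ?_⟩
  intro b hb
  rcases Nat.lt_or_ge l (b : ℕ) with hgt | hge
  · have hfeq : (Finset.univ.filter fun p => A' p = b) =
        (Finset.univ.filter fun p => A p = b) := by
      ext p
      simp only [Finset.mem_filter, Finset.mem_univ, true_and]
      exact hfb b hgt p
    rw [hfeq]
    exact hAcons b (by omega)
  · have hbeq : b = bl := Fin.ext (show (b : ℕ) = l by omega)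
    subst hbeq
    have hfeq : (Finset.univ.filter fun p => A' p = bl) = T := by
      ext p
      simp only [Finset.mem_filter, Finset.mem_univ, true_and]
      exact hfl p
    rw [hfeq]
    simp only [hbl]
    calc (∑ p ∈ T, w ((p.2 : Fin n) : ℕ)) ≤ ∑ _p ∈ T, w l := by
          refine Finset.sum_le_sum ?_
          intro p hp
          exact hw.1 l _ (hT p hp).2
      _ = d * w l := by rw [Finset.sum_const, hTcard, smul_eq_mul]
      _ ≤ z l := hcon
end

section
/- Let w ∈ P_n be nonzero with w_i − w_{i+1} ≤ 1 for all i = 1,…,n−1. Then there exists D such that for all d ≥ D, X_w^d equals the set of all C ∈ P_n with |C| = d·|w| and C_i + C_{i+1} + ⋯ + C_n ≥ d·(w_i + w_{i+1} + ⋯ + w_n) for all i = 1,…,n (that is, the set of partitions of size d·|w| dominated by d·w). -/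
open MvPolynomial

def cnt (n : ℕ) (w : ℕ → ℕ) (v : ℕ) : ℕ :=
  ((Finset.range n).filter fun s => w s = v).card

def GoodN (n : ℕ) (w : ℕ → ℕ) (d : ℕ) (y : ℕ → ℕ) : Prop :=
  ∃ N : ℕ → ℕ → ℕ,
    (∀ v, ∑ t ∈ Finset.range n, N v t = d * cnt n w v) ∧
    (∀ t < n, ∑ v ∈ Finset.range (w 0 + 1), N v t = d) ∧
    (∀ t < n, ∑ v ∈ Finset.range (w 0 + 1), v * N v t = y t)

lemma cnt_pos_iff (n : ℕ) (w : ℕ → ℕ) (v : ℕ) :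
    0 < cnt n w v ↔ ∃ s, s < n ∧ w s = v := by
  simp [cnt, Finset.card_pos, Finset.Nonempty, Finset.mem_filter, Finset.mem_range]

lemma cnt_eq_zero_of_gt (n : ℕ) (w : ℕ → ℕ) (hw : PartitionOn n w) (v : ℕ)
    (hv : w 0 < v) : cnt n w v = 0 := by
  by_contra h
  obtain ⟨s, _, rfl⟩ := (cnt_pos_iff n w v).1 (Nat.pos_of_ne_zero h)
  exact absurd (hw.1 0 s (Nat.zero_le _)) (by omega)

lemma GoodN_congr (n : ℕ) (w : ℕ → ℕ) (d : ℕ) (y y' : ℕ → ℕ)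
    (h : ∀ t, t < n → y t = y' t) : GoodN n w d y → GoodN n w d y' := by
  rintro ⟨N, h1, h2, h3⟩
  exact ⟨N, h1, h2, fun t ht => (h3 t ht).trans (h t ht)⟩

lemma GoodN_support (n : ℕ) (w : ℕ → ℕ) (hw : PartitionOn n w) (d : ℕ)
    (N : ℕ → ℕ → ℕ) (h1 : ∀ v, ∑ t ∈ Finset.range n, N v t = d * cnt n w v)
    {v t : ℕ} (hv : w 0 < v) (ht : t < n) : N v t = 0 := by
  have h := h1 v
  rw [cnt_eq_zero_of_gt n w hw v hv, Nat.mul_zero] at h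
  exact (Finset.sum_eq_zero_iff.1 h) t (Finset.mem_range.2 ht)

/-- discrete intermediate value -/
lemma ivt (n : ℕ) (w : ℕ → ℕ) (hstep : ∀ i, i + 1 < n → w i ≤ w (i + 1) + 1) :
    ∀ (k s1 r : ℕ), s1 + k < n → w (s1 + k) ≤ r → r ≤ w s1 → ∃ s, s < n ∧ w s = r := by
  intro k
  induction k with
  | zero =>
    intro s1 r h1 h2 h3
    simp only [Nat.add_zero] at h1 h2
    exact ⟨s1, h1, by omega⟩
  | succ k ih =>
    intro s1 r h1 h2 h3
    by_cases hr : w s1 = r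
    · exact ⟨s1, by omega, hr⟩
    · have hs1 : s1 + 1 < n := by omega
      have := hstep s1 hs1
      have hr1 : r ≤ w (s1 + 1) := by omega
      have heq : s1 + 1 + k = s1 + (k+1) := by omega
      exact ih (s1+1) r (by omega) (by rw [heq]; exact h2) hr1

lemma cnt_mid (n : ℕ) (w : ℕ → ℕ) (hw : PartitionOn n w)
    (hstep : ∀ i, i + 1 < n → w i ≤ w (i + 1) + 1) {a b r : ℕ}
    (ha : 0 < cnt n w a) (hb : 0 < cnt n w b) (har : a ≤ r) (hrb : r ≤ b) :
    0 < cnt n w r := by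
  obtain ⟨s0, hs0, hws0⟩ := (cnt_pos_iff n w a).1 ha
  obtain ⟨s1, hs1, hws1⟩ := (cnt_pos_iff n w b).1 hb
  rcases le_or_gt s1 s0 with h | h
  · obtain ⟨s, hs, hws⟩ := ivt n w hstep (s0 - s1) s1 r (by omega)
      (by rw [show s1 + (s0 - s1) = s0 by omega]; omega) (by omega)
    exact (cnt_pos_iff n w r).2 ⟨s, hs, hws⟩
  · have : w s0 ≥ w s1 := hw.1 s0 s1 (by omega)
    have : a = r := by omega
    exact this ▸ ha

/-- sum of w over any i-element subset of Fin n is at most the head sum -/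
lemma sum_top (n : ℕ) (w : ℕ → ℕ) (hw : PartitionOn n w) :
    ∀ (i : ℕ) (T : Finset (Fin n)), T.card = i →
      ∑ s ∈ T, w (s : ℕ) ≤ ∑ s ∈ Finset.range i, w s := by
  intro i
  induction i with
  | zero => intro T hT; simp [Finset.card_eq_zero.1 hT]
  | succ i ih =>
    intro T hT
    have hne : T.Nonempty := Finset.card_pos.1 (by omega)
    set a := T.max' hne with ha
    have haT : a ∈ T := T.max'_mem hne
    have hai : i ≤ (a : ℕ) := by
      have hsub : T ⊆ Finset.univ.filter (fun s : Fin n => (s : ℕ) ≤ (a : ℕ)) := by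
        intro x hx
        simp only [Finset.mem_filter, Finset.mem_univ, true_and]
        exact_mod_cast T.le_max' x hx
      have hcard : T.card ≤ (a : ℕ) + 1 := by
        have := Finset.card_le_card hsub
        have h2 : (Finset.univ.filter (fun s : Fin n => (s : ℕ) ≤ (a : ℕ))).card ≤ (a:ℕ)+1 := by
          have hinj : Set.InjOn (fun s : Fin n => (s : ℕ))
              (Finset.univ.filter (fun s : Fin n => (s : ℕ) ≤ (a : ℕ))) := by
            intro x _ y _ h; exact Fin.ext h
          calc (Finset.univ.filter (fun s : Fin n => (s : ℕ) ≤ (a : ℕ))).card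
              = ((Finset.univ.filter (fun s : Fin n => (s : ℕ) ≤ (a : ℕ))).image
                  (fun s : Fin n => (s : ℕ))).card := (Finset.card_image_of_injOn hinj).symm
            _ ≤ (Finset.range ((a:ℕ)+1)).card := by
                apply Finset.card_le_card
                intro x hx
                simp only [Finset.mem_image, Finset.mem_filter] at hx
                obtain ⟨y, ⟨_, hy⟩, rfl⟩ := hx
                simp [Finset.mem_range]; omega
            _ = (a:ℕ)+1 := by simp
        omega
      omega
    have := ih (T.erase a) (by rw [Finset.card_erase_of_mem haT, hT]; rfl)
    calc ∑ s ∈ T, w (s:ℕ) = ∑ s ∈ T.erase a, w (s:ℕ) + w (a:ℕ) :=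
          (Finset.sum_erase_add T _ haT).symm
      _ ≤ ∑ s ∈ Finset.range i, w s + w i := by
          have : w (a:ℕ) ≤ w i := hw.1 i (a:ℕ) hai
          omega
      _ = ∑ s ∈ Finset.range (i+1), w s := (Finset.sum_range_succ w i).symm

lemma sum_range_eq_filter (n i : ℕ) (hi : i ≤ n) (g : ℕ → ℕ) :
    ∑ s ∈ Finset.range i, g s =
      ∑ s ∈ Finset.univ.filter (fun s : Fin n => (s : ℕ) < i), g (s : ℕ) := by
  rw [Finset.sum_filter]
  rw [Fin.sum_univ_eq_sum_range (fun s => if s < i then g s else 0) n]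
  rw [← Finset.sum_filter]
  congr 1
  ext s
  simp only [Finset.mem_filter, Finset.mem_range]
  omega

lemma card_filter_lt (n i : ℕ) (hi : i ≤ n) :
    (Finset.univ.filter (fun s : Fin n => (s : ℕ) < i)).card = i := by
  have := sum_range_eq_filter n i hi (fun _ => 1)
  simpa using this.symm

lemma heads_le (n d : ℕ) (w C : ℕ → ℕ) (hw : PartitionOn n w)
    (σ : Fin d → Equiv.Perm (Fin n))
    (hσ : ∀ i : Fin n, C (i : ℕ) = ∑ j : Fin d, w ((σ j i : Fin n) : ℕ))
    (i : ℕ) (hi : i ≤ n) :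
    ∑ s ∈ Finset.range i, C s ≤ d * ∑ s ∈ Finset.range i, w s := by
  rw [sum_range_eq_filter n i hi C]
  set F := Finset.univ.filter (fun s : Fin n => (s : ℕ) < i) with hF
  have : ∑ s ∈ F, C (s : ℕ) = ∑ k : Fin d, ∑ s ∈ F, w ((σ k s : Fin n) : ℕ) := by
    rw [Finset.sum_comm]
    exact Finset.sum_congr rfl fun s _ => hσ s
  rw [this]
  have hbound : ∀ k : Fin d, ∑ s ∈ F, w ((σ k s : Fin n) : ℕ) ≤ ∑ s ∈ Finset.range i, w s := by
    intro k
    have himg : ∑ s ∈ F.image (σ k), w (s : ℕ) = ∑ s ∈ F, w ((σ k s : Fin n) : ℕ) :=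
      Finset.sum_image (fun x _ y _ h => (σ k).injective h)
    rw [← himg]
    apply sum_top n w hw i
    rw [Finset.card_image_of_injective _ (σ k).injective]
    exact card_filter_lt n i hi
  calc ∑ k : Fin d, ∑ s ∈ F, w ((σ k s : Fin n) : ℕ)
      ≤ ∑ _k : Fin d, ∑ s ∈ Finset.range i, w s := Finset.sum_le_sum fun k _ => hbound k
    _ = d * ∑ s ∈ Finset.range i, w s := by simp [Finset.sum_const, mul_comm]

lemma total_eq (n d : ℕ) (w C : ℕ → ℕ)
    (σ : Fin d → Equiv.Perm (Fin n))
    (hσ : ∀ i : Fin n, C (i : ℕ) = ∑ j : Fin d, w ((σ j i : Fin n) : ℕ)) :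
    ∑ s ∈ Finset.range n, C s = d * ∑ s ∈ Finset.range n, w s := by
  rw [← Fin.sum_univ_eq_sum_range C n, ← Fin.sum_univ_eq_sum_range w n]
  have : ∑ s : Fin n, C (s : ℕ) = ∑ k : Fin d, ∑ s : Fin n, w ((σ k s : Fin n) : ℕ) := by
    rw [Finset.sum_comm]
    exact Finset.sum_congr rfl fun s _ => hσ s
  rw [this]
  have : ∀ k : Fin d, ∑ s : Fin n, w ((σ k s : Fin n) : ℕ) = ∑ s : Fin n, w (s : ℕ) :=
    fun k => Equiv.sum_comp (σ k) (fun s : Fin n => w (s : ℕ))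
  rw [Finset.sum_congr rfl fun k _ => this k]
  simp [Finset.sum_const, mul_comm]

lemma cnt_eq_fin (n : ℕ) (w : ℕ → ℕ) (v : ℕ) :
    (Finset.univ.filter (fun s : Fin n => w (s : ℕ) = v)).card = cnt n w v := by
  unfold cnt
  rw [Finset.card_filter, Finset.card_filter]
  exact Fin.sum_univ_eq_sum_range (fun s => if w s = v then 1 else 0) n

lemma decomp (n : ℕ) (w : ℕ → ℕ) (hw : PartitionOn n w) :
    ∀ (d : ℕ) (x : ℕ → ℕ), GoodN n w d x → ∃ σ : Fin d → Equiv.Perm (Fin n),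
      ∀ i : Fin n, x (i : ℕ) = ∑ j : Fin d, w ((σ j i : Fin n) : ℕ) := by
  intro d
  induction d with
  | zero =>
    rintro x ⟨N, h1, h2, h3⟩
    refine ⟨Fin.elim0, fun i => ?_⟩
    have hN : ∀ v t, t < n → N v t = 0 := by
      intro v t ht
      have := h1 v
      rw [Nat.zero_mul] at this
      exact Finset.sum_eq_zero_iff.1 this t (Finset.mem_range.2 ht)
    have := h3 (i : ℕ) i.isLt
    rw [Finset.sum_congr rfl (fun v _ => by rw [hN v (i:ℕ) i.isLt, Nat.mul_zero])] at this
    simp at this ⊢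
    omega
  | succ d ih =>
    rintro x ⟨N, h1, h2, h3⟩
    classical
    set V := Finset.range (w 0 + 1) with hV
    set tset : Fin n → Finset (Fin n) :=
      fun col => Finset.univ.filter (fun s => 1 ≤ N (w (s : ℕ)) (col : ℕ)) with htset
    have hall : ∀ S : Finset (Fin n), S.card ≤ (S.biUnion tset).card := by
      intro S
      set VS := V.filter (fun v => ∃ col ∈ S, 1 ≤ N v (col : ℕ)) with hVS
      have step1 : (d+1) * S.card = ∑ v ∈ VS, ∑ col ∈ S, N v (col : ℕ) := by
        have : ∀ col ∈ S, ∑ v ∈ V, N v (col : ℕ) = d + 1 := fun col _ => h2 _ col.isLt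
        calc (d+1) * S.card = ∑ col ∈ S, ∑ v ∈ V, N v (col : ℕ) := by
              rw [Finset.sum_congr rfl this]; simp [mul_comm]
          _ = ∑ v ∈ V, ∑ col ∈ S, N v (col : ℕ) := Finset.sum_comm
          _ = ∑ v ∈ VS, ∑ col ∈ S, N v (col : ℕ) := by
              refine (Finset.sum_subset (Finset.filter_subset _ _) ?_).symm
              intro v hv hnv
              rw [Finset.mem_filter] at hnv
              push_neg at hnv
              refine Finset.sum_eq_zero fun col hcol => ?_
              have := hnv hv col hcol
              omega
      have step2 : ∑ v ∈ VS, ∑ col ∈ S, N v (col : ℕ) ≤ (d+1) * ∑ v ∈ VS, cnt n w v := by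
        rw [Finset.mul_sum]
        refine Finset.sum_le_sum fun v _ => ?_
        calc ∑ col ∈ S, N v (col : ℕ) ≤ ∑ col : Fin n, N v (col : ℕ) :=
              Finset.sum_le_sum_of_subset (Finset.subset_univ S)
          _ = ∑ t ∈ Finset.range n, N v t := Fin.sum_univ_eq_sum_range (fun t => N v t) n
          _ = (d+1) * cnt n w v := h1 v
      have hcard : S.card ≤ ∑ v ∈ VS, cnt n w v := by
        have := step1.le.trans step2
        exact Nat.le_of_mul_le_mul_left this (by omega)
      have step3 : ∑ v ∈ VS, cnt n w v ≤ (S.biUnion tset).card := by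
        have hdisj : ∀ v ∈ VS, ∀ v' ∈ VS, v ≠ v' →
            Disjoint (Finset.univ.filter (fun s : Fin n => w (s:ℕ) = v))
              (Finset.univ.filter (fun s : Fin n => w (s:ℕ) = v')) := by
          intro v _ v' _ hne
          simp only [Finset.disjoint_left, Finset.mem_filter]
          rintro s ⟨_, h⟩ ⟨_, h'⟩
          exact hne (h ▸ h' ▸ rfl)
        calc ∑ v ∈ VS, cnt n w v
            = ∑ v ∈ VS, (Finset.univ.filter (fun s : Fin n => w (s:ℕ) = v)).card := by
              exact Finset.sum_congr rfl fun v _ => (cnt_eq_fin n w v).symm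
          _ = (VS.biUnion (fun v => Finset.univ.filter (fun s : Fin n => w (s:ℕ) = v))).card :=
              (Finset.card_biUnion hdisj).symm
          _ ≤ (S.biUnion tset).card := by
              apply Finset.card_le_card
              intro s hs
              rw [Finset.mem_biUnion] at hs ⊢
              obtain ⟨v, hv, hsv⟩ := hs
              rw [Finset.mem_filter] at hsv
              rw [Finset.mem_filter] at hv
              obtain ⟨_, col, hcol, hN⟩ := hv
              exact ⟨col, hcol, by simp [htset, hsv.2, hN]⟩
      exact hcard.trans step3
    obtain ⟨f, hfinj, hf⟩ := (Finset.all_card_le_biUnion_card_iff_existsInjective' tset).1 hall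
    have hfN : ∀ col : Fin n, 1 ≤ N (w ((f col : Fin n) : ℕ)) (col : ℕ) := by
      intro col
      have := hf col
      simpa [htset] using this
    have hfbij : Function.Bijective f := Finite.injective_iff_bijective.mp hfinj
    set D : ℕ → ℕ → ℕ := fun v t =>
      if h : t < n then (if w ((f ⟨t, h⟩ : Fin n) : ℕ) = v then 1 else 0) else 0 with hD
    have hDle : ∀ v t, D v t ≤ N v t := by
      intro v t
      by_cases h : t < n
      · simp only [hD, dif_pos h]
        split_ifs with hv
        · have h2 := hfN ⟨t, h⟩
          rw [hv] at h2
          simpa using h2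
        · omega
      · simp [hD, dif_neg h]
    set N' : ℕ → ℕ → ℕ := fun v t => N v t - D v t with hN'
    set x' : ℕ → ℕ := fun t => x t - (if h : t < n then w ((f ⟨t, h⟩ : Fin n) : ℕ) else 0)
      with hx'
    have hwfV : ∀ col : Fin n, w ((f col : Fin n) : ℕ) ∈ V := by
      intro col
      rw [hV, Finset.mem_range]
      have := hw.1 0 ((f col : Fin n) : ℕ) (Nat.zero_le _)
      omega
    have hgood : GoodN n w d x' := by
      refine ⟨N', ?_, ?_, ?_⟩
      · intro v
        have hs : ∑ t ∈ Finset.range n, N' v t + ∑ t ∈ Finset.range n, D v t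
            = ∑ t ∈ Finset.range n, N v t := by
          rw [← Finset.sum_add_distrib]
          refine Finset.sum_congr rfl fun t _ => ?_
          have := hDle v t
          simp only [hN']
          omega
        have hDsum : ∑ t ∈ Finset.range n, D v t = cnt n w v := by
          have e1 : ∑ t ∈ Finset.range n, D v t
              = ∑ col : Fin n, (if w ((f col : Fin n) : ℕ) = v then 1 else 0) := by
            rw [← Fin.sum_univ_eq_sum_range (fun t => D v t) n]
            refine Finset.sum_congr rfl fun col _ => ?_
            simp [hD, col.isLt]
          have e2 : ∑ col : Fin n, (if w ((f col : Fin n) : ℕ) = v then 1 else 0)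
              = ∑ s : Fin n, (if w ((s : Fin n) : ℕ) = v then 1 else 0) :=
            Function.Bijective.sum_comp hfbij (fun s : Fin n => if w ((s : Fin n) : ℕ) = v then 1 else 0)
          rw [e1, e2, ← cnt_eq_fin n w v, Finset.sum_boole]
          simp
        have := h1 v
        have he : (d+1) * cnt n w v = d * cnt n w v + cnt n w v := by ring
        omega
      · intro t ht
        rw [← hV]
        have hs : ∑ v ∈ V, N' v t + ∑ v ∈ V, D v t = ∑ v ∈ V, N v t := by
          rw [← Finset.sum_add_distrib]
          refine Finset.sum_congr rfl fun v _ => ?_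
          have := hDle v t
          simp only [hN']
          omega
        have hDsum : ∑ v ∈ V, D v t = 1 := by
          have hvv : ∀ v, D v t = if v = w ((f ⟨t, ht⟩ : Fin n) : ℕ) then 1 else 0 := by
            intro v
            simp only [hD, dif_pos ht]
            by_cases h : w ((f ⟨t, ht⟩ : Fin n) : ℕ) = v
            · rw [if_pos h, if_pos h.symm]
            · rw [if_neg h, if_neg (fun hh => h hh.symm)]
          rw [Finset.sum_congr rfl fun v _ => hvv v, Finset.sum_ite_eq' V]
          rw [if_pos (hwfV ⟨t, ht⟩)]
        have := h2 t ht
        omega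
      · intro t ht
        rw [← hV]
        have hs : ∑ v ∈ V, v * N' v t + ∑ v ∈ V, v * D v t = ∑ v ∈ V, v * N v t := by
          rw [← Finset.sum_add_distrib]
          refine Finset.sum_congr rfl fun v _ => ?_
          have hle := hDle v t
          have heq : N' v t + D v t = N v t := by simp only [hN']; omega
          calc v * N' v t + v * D v t = v * (N' v t + D v t) := (Nat.mul_add v _ _).symm
            _ = v * N v t := by rw [heq]
        have hDsum : ∑ v ∈ V, v * D v t = w ((f ⟨t, ht⟩ : Fin n) : ℕ) := by
          have hvv : ∀ v, v * D v t = if v = w ((f ⟨t, ht⟩ : Fin n) : ℕ) then v else 0 := by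
            intro v
            simp only [hD, dif_pos ht]
            by_cases h : w ((f ⟨t, ht⟩ : Fin n) : ℕ) = v
            · rw [if_pos h, if_pos h.symm]; omega
            · rw [if_neg h, if_neg (fun hh => h hh.symm)]; omega
          rw [Finset.sum_congr rfl fun v _ => hvv v, Finset.sum_ite_eq' V]
          rw [if_pos (hwfV ⟨t, ht⟩)]
        have := h3 t ht
        have hxw : w ((f ⟨t, ht⟩ : Fin n) : ℕ) ≤ x t := by
          rw [← h3 t ht]
          calc w ((f ⟨t, ht⟩ : Fin n) : ℕ)
              ≤ w ((f ⟨t, ht⟩ : Fin n) : ℕ) * N (w ((f ⟨t, ht⟩ : Fin n) : ℕ)) t :=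
                Nat.le_mul_of_pos_right _ (hfN ⟨t, ht⟩)
            _ ≤ ∑ v ∈ V, v * N v t :=
                Finset.single_le_sum (f := fun v => v * N v t)
                  (fun v _ => Nat.zero_le _) (hwfV ⟨t, ht⟩)
        simp only [hx', dif_pos ht]
        omega
    obtain ⟨σs, hσs⟩ := ih x' hgood
    refine ⟨Fin.cons (Equiv.ofBijective f hfbij) σs, fun i => ?_⟩
    rw [Fin.sum_univ_succ]
    simp only [Fin.cons_zero, Fin.cons_succ]
    have h0 : ((Equiv.ofBijective f hfbij) i : Fin n) = f i := rfl
    rw [h0, ← hσs i]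
    have hxw : w ((f i : Fin n) : ℕ) ≤ x (i : ℕ) := by
      rw [← h3 (i : ℕ) i.isLt]
      calc w ((f i : Fin n) : ℕ)
          ≤ w ((f i : Fin n) : ℕ) * N (w ((f i : Fin n) : ℕ)) (i : ℕ) :=
            Nat.le_mul_of_pos_right _ (hfN i)
        _ ≤ ∑ v ∈ V, v * N v (i : ℕ) :=
            Finset.single_le_sum (f := fun v => v * N v (i : ℕ))
              (fun v _ => Nat.zero_le _) (hwfV i)
    simp only [hx', dif_pos i.isLt, Fin.eta]
    omega

lemma sum_ite_cond (s : Finset ℕ) (b c : ℕ) (P : Prop) [Decidable P] :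
    ∑ t ∈ s, (if t = b ∧ P then c else 0) = if b ∈ s ∧ P then c else 0 := by
  by_cases hP : P
  · simp only [hP, and_true]
    exact Finset.sum_ite_eq' s b (fun _ => c)
  · simp [hP]

lemma sum_ite_cond' (s : Finset ℕ) (b c : ℕ) (P : Prop) [Decidable P] :
    ∑ t ∈ s, (if P ∧ t = b then c else 0) = if P ∧ b ∈ s then c else 0 := by
  have : ∀ t ∈ s, (if P ∧ t = b then c else 0) = (if t = b ∧ P then c else 0) := by
    intro t _
    exact if_congr and_comm rfl rfl
  rw [Finset.sum_congr rfl this, sum_ite_cond]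
  exact if_congr and_comm rfl rfl

lemma mulIteZero (v c : ℕ) (P : Prop) [Decidable P] :
    v * (if P then c else 0) = if P then v * c else 0 := by
  split_ifs <;> simp

lemma ite_mem_range (b W c : ℕ) (P : Prop) [Decidable P] (h : b ≤ W) :
    (if b ∈ Finset.range (W + 1) ∧ P then c else 0) = if P then c else 0 := by
  have hb : b ∈ Finset.range (W + 1) := Finset.mem_range.2 (by omega)
  simp [hb]

set_option maxHeartbeats 2000000 in
lemma move (n : ℕ) (w : ℕ → ℕ) (hw : PartitionOn n w)
    (hstep : ∀ i, i + 1 < n → w i ≤ w (i + 1) + 1)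
    (d : ℕ) (hd : n + 1 ≤ d) (x : ℕ → ℕ) (i j : ℕ) (hi : i < n) (hj : j < n)
    (hij : i ≠ j) (hgt : x j < x i) (hx : GoodN n w d x) :
    GoodN n w d (fun s => if s = i then x i - 1 else if s = j then x j + 1 else x s) := by
  classical
  obtain ⟨N, h1, h2, h3⟩ := hx
  have hsuppN : ∀ v t, t < n → w 0 < v → N v t = 0 :=
    fun v t ht hv => GoodN_support n w hw d N h1 hv ht
  have hne : ∀ t, t < n → ((Finset.range (w 0 + 1)).filter fun v => 1 ≤ N v t).Nonempty := by
    intro t ht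
    rw [Finset.filter_nonempty_iff]
    by_contra h
    push_neg at h
    have : ∑ v ∈ Finset.range (w 0 + 1), N v t = 0 :=
      Finset.sum_eq_zero fun v hv => by have := h v hv; omega
    rw [h2 t ht] at this
    omega
  set va := (((Finset.range (w 0 + 1)).filter fun v => 1 ≤ N v i)).max' (hne i hi) with hva
  set ua := (((Finset.range (w 0 + 1)).filter fun v => 1 ≤ N v j)).min' (hne j hj) with hua
  have hva1 : 1 ≤ N va i := (Finset.mem_filter.1 (Finset.max'_mem _ (hne i hi))).2
  have hua1 : 1 ≤ N ua j := (Finset.mem_filter.1 (Finset.min'_mem _ (hne j hj))).2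
  have hvaW : va ≤ w 0 := by
    have := (Finset.mem_filter.1 (Finset.max'_mem _ (hne i hi))).1
    rw [Finset.mem_range] at this; omega
  have huaW : ua ≤ w 0 := by
    have := (Finset.mem_filter.1 (Finset.min'_mem _ (hne j hj))).1
    rw [Finset.mem_range] at this; omega
  have hvamax : ∀ v, 1 ≤ N v i → v ≤ va := by
    intro v hv
    by_cases hvW : v ≤ w 0
    · rw [hva]
      exact Finset.le_max' ((Finset.range (w 0 + 1)).filter fun v => 1 ≤ N v i) v
        (Finset.mem_filter.2 ⟨Finset.mem_range.2 (by omega), hv⟩)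
    · have := hsuppN v i hi (by omega); omega
  have huamin : ∀ v, 1 ≤ N v j → ua ≤ v := by
    intro v hv
    by_cases hvW : v ≤ w 0
    · rw [hua]
      exact Finset.min'_le ((Finset.range (w 0 + 1)).filter fun v => 1 ≤ N v j) v
        (Finset.mem_filter.2 ⟨Finset.mem_range.2 (by omega), hv⟩)
    · have := hsuppN v j hj (by omega); omega
  have hxi : x i ≤ d * va := by
    rw [← h3 i hi]
    calc ∑ v ∈ Finset.range (w 0 + 1), v * N v i
        ≤ ∑ v ∈ Finset.range (w 0 + 1), va * N v i := by
          refine Finset.sum_le_sum fun v _ => ?_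
          by_cases h : 1 ≤ N v i
          · exact Nat.mul_le_mul_right _ (hvamax v h)
          · have hz : N v i = 0 := by omega
            simp [hz]
      _ = va * d := by rw [← Finset.mul_sum, h2 i hi]
      _ = d * va := Nat.mul_comm _ _
  have hxj : d * ua ≤ x j := by
    rw [← h3 j hj]
    calc (d : ℕ) * ua = ua * d := Nat.mul_comm _ _
      _ = ∑ v ∈ Finset.range (w 0 + 1), ua * N v j := by rw [← Finset.mul_sum, h2 j hj]
      _ ≤ ∑ v ∈ Finset.range (w 0 + 1), v * N v j := by
          refine Finset.sum_le_sum fun v _ => ?_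
          by_cases h : 1 ≤ N v j
          · exact Nat.mul_le_mul_right _ (huamin v h)
          · have hz : N v j = 0 := by omega
            simp [hz]
  have huv : ua < va := by
    have h' : d * ua < d * va := by omega
    exact Nat.lt_of_mul_lt_mul_left h'
  have hcva : 0 < cnt n w va := by
    rcases Nat.eq_zero_or_pos (cnt n w va) with h | h
    · exfalso
      have h' := h1 va
      rw [h, Nat.mul_zero] at h'
      have := Finset.sum_eq_zero_iff.1 h' i (Finset.mem_range.2 hi)
      omega
    · exact h
  have hcua : 0 < cnt n w ua := by
    rcases Nat.eq_zero_or_pos (cnt n w ua) with h | h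
    · exfalso
      have h' := h1 ua
      rw [h, Nat.mul_zero] at h'
      have := Finset.sum_eq_zero_iff.1 h' j (Finset.mem_range.2 hj)
      omega
    · exact h
  have hpick : ∀ r, ∃ t, (r ∈ Finset.Icc (ua+1) (va-1)) → (t < n ∧ 2 ≤ N r t) := by
    intro r
    by_cases hr : r ∈ Finset.Icc (ua+1) (va-1)
    · rw [Finset.mem_Icc] at hr
      have hcr : 0 < cnt n w r := cnt_mid n w hw hstep hcua hcva (by omega) (by omega)
      by_contra h
      push_neg at h
      have hb : ∀ t ∈ Finset.range n, N r t ≤ 1 := by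
        intro t ht
        rw [Finset.mem_range] at ht
        have := (h t).2 ht
        omega
      have hsumle : ∑ t ∈ Finset.range n, N r t ≤ n := by
        calc ∑ t ∈ Finset.range n, N r t ≤ ∑ _t ∈ Finset.range n, 1 := Finset.sum_le_sum hb
          _ = n := by simp
      have he1 := h1 r
      have he2 : d * 1 ≤ d * cnt n w r := Nat.mul_le_mul_left d hcr
      omega
    · exact ⟨0, fun h => absurd h hr⟩
  choose tF htF using hpick
  set K := Finset.Icc (ua+1) (va-1) with hK
  have hKmem : ∀ r ∈ K, ua + 1 ≤ r ∧ r ≤ va - 1 := fun r hr => Finset.mem_Icc.1 hr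
  set sub : ℕ → ℕ → ℕ := fun v t =>
    (if v = va ∧ t = i then 1 else 0) + (if v = ua ∧ t = j then 1 else 0) +
      ∑ r ∈ K, (if v = r ∧ t = tF r then 2 else 0) with hsub
  set add : ℕ → ℕ → ℕ := fun v t =>
    (if v = va - 1 ∧ t = i then 1 else 0) + (if v = ua + 1 ∧ t = j then 1 else 0) +
      ∑ r ∈ K, ((if v = r + 1 ∧ t = tF r then 1 else 0) +
        (if v = r - 1 ∧ t = tF r then 1 else 0)) with hadd
  have hsubK : ∀ v t, ∑ r ∈ K, (if v = r ∧ t = tF r then 2 else 0)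
      = if v ∈ K ∧ t = tF v then 2 else 0 := by
    intro v t
    have hterm : ∀ r ∈ K, (if v = r ∧ t = tF r then 2 else 0)
        = (if r = v then (if t = tF v then 2 else 0) else 0) := by
      intro r _
      by_cases h : r = v
      · subst h; simp
      · have h' : ¬(v = r ∧ t = tF r) := fun hh => h hh.1.symm
        simp [h, h']
    rw [Finset.sum_congr rfl hterm, Finset.sum_ite_eq' K v (fun _ => if t = tF v then 2 else 0)]
    by_cases hv : v ∈ K <;> by_cases ht : t = tF v <;> simp [hv, ht]
  have hsub_le : ∀ v t, sub v t ≤ N v t := by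
    intro v t
    simp only [hsub]
    rw [hsubK v t]
    by_cases c1 : v = va ∧ t = i
    · obtain ⟨hv1, ht1⟩ := c1
      have e2 : ¬(v = ua ∧ t = j) := by rintro ⟨h, -⟩; omega
      have e3 : ¬(v ∈ K ∧ t = tF v) := by
        rintro ⟨h, -⟩
        have := hKmem v h
        omega
      rw [if_pos ⟨hv1, ht1⟩, if_neg e2, if_neg e3]
      rw [hv1, ht1]
      simpa using hva1
    · rw [if_neg c1]
      by_cases c2 : v = ua ∧ t = j
      · obtain ⟨hv1, ht1⟩ := c2
        have e3 : ¬(v ∈ K ∧ t = tF v) := by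
          rintro ⟨h, -⟩
          have := hKmem v h
          omega
        rw [if_pos ⟨hv1, ht1⟩, if_neg e3]
        rw [hv1, ht1]
        simpa using hua1
      · rw [if_neg c2]
        by_cases c3 : v ∈ K ∧ t = tF v
        · obtain ⟨hvK, htv⟩ := c3
          rw [if_pos ⟨hvK, htv⟩, htv]
          simpa using (htF v hvK).2
        · rw [if_neg c3]; omega
  refine ⟨fun v t => N v t + add v t - sub v t, ?_, ?_, ?_⟩
  · -- row sums
    intro v
    have hsum : ∑ t ∈ Finset.range n, (N v t + add v t - sub v t)
        + ∑ t ∈ Finset.range n, sub v t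
        = ∑ t ∈ Finset.range n, N v t + ∑ t ∈ Finset.range n, add v t := by
      rw [← Finset.sum_add_distrib, ← Finset.sum_add_distrib]
      refine Finset.sum_congr rfl fun t _ => ?_
      have := hsub_le v t
      omega
    have hsubrow : ∑ t ∈ Finset.range n, sub v t
        = (if v = va then 1 else 0) + (if v = ua then 1 else 0)
          + (if v ∈ K then 2 else 0) := by
      simp only [hsub]
      rw [Finset.sum_add_distrib, Finset.sum_add_distrib]
      congr 1
      · congr 1
        · rw [sum_ite_cond' (Finset.range n) i 1 (v = va)]
          simp [Finset.mem_range, hi]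
        · rw [sum_ite_cond' (Finset.range n) j 1 (v = ua)]
          simp [Finset.mem_range, hj]
      · rw [Finset.sum_comm]
        have hterm : ∀ r ∈ K, ∑ t ∈ Finset.range n, (if v = r ∧ t = tF r then 2 else 0)
            = if v = r then 2 else 0 := by
          intro r hr
          rw [sum_ite_cond' (Finset.range n) (tF r) 2 (v = r)]
          have := (htF r hr).1
          by_cases h : v = r <;> simp [h, Finset.mem_range, this]
        rw [Finset.sum_congr rfl hterm, Finset.sum_ite_eq K v (fun _ => 2)]
    have haddrow : ∑ t ∈ Finset.range n, add v t
        = (if v = va - 1 then 1 else 0) + (if v = ua + 1 then 1 else 0)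
          + ((if v - 1 ∈ K ∧ 1 ≤ v then 1 else 0) + (if v + 1 ∈ K then 1 else 0)) := by
      simp only [hadd]
      rw [Finset.sum_add_distrib, Finset.sum_add_distrib]
      congr 1
      · congr 1
        · rw [sum_ite_cond' (Finset.range n) i 1 (v = va - 1)]
          simp [Finset.mem_range, hi]
        · rw [sum_ite_cond' (Finset.range n) j 1 (v = ua + 1)]
          simp [Finset.mem_range, hj]
      · rw [Finset.sum_comm]
        have hterm : ∀ r ∈ K, ∑ t ∈ Finset.range n,
            ((if v = r + 1 ∧ t = tF r then 1 else 0) + (if v = r - 1 ∧ t = tF r then 1 else 0))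
            = (if r = v - 1 ∧ 1 ≤ v then 1 else 0) + (if r = v + 1 then 1 else 0) := by
          intro r hr
          rw [Finset.sum_add_distrib]
          rw [sum_ite_cond' (Finset.range n) (tF r) 1 (v = r + 1)]
          rw [sum_ite_cond' (Finset.range n) (tF r) 1 (v = r - 1)]
          have htn := (htF r hr).1
          have hrm := hKmem r hr
          congr 1
          · have : (v = r + 1 ∧ tF r ∈ Finset.range n) ↔ (r = v - 1 ∧ 1 ≤ v) := by
              rw [Finset.mem_range]
              constructor
              · rintro ⟨h, -⟩; omega
              · rintro ⟨h, h'⟩; constructor <;> omega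
            exact if_congr this rfl rfl
          · have : (v = r - 1 ∧ tF r ∈ Finset.range n) ↔ (r = v + 1) := by
              rw [Finset.mem_range]
              constructor
              · rintro ⟨h, -⟩; omega
              · intro h; constructor <;> omega
            exact if_congr this rfl rfl
        rw [Finset.sum_congr rfl hterm, Finset.sum_add_distrib]
        congr 1
        · rw [sum_ite_cond K (v - 1) 1 (1 ≤ v)]
        · rw [Finset.sum_ite_eq' K (v + 1) (fun _ => 1)]
    have hbal : (if v = va then 1 else 0) + (if v = ua then 1 else 0) + (if v ∈ K then 2 else 0)
        = (if v = va - 1 then 1 else 0) + (if v = ua + 1 then 1 else 0)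
          + ((if v - 1 ∈ K ∧ 1 ≤ v then 1 else 0) + (if v + 1 ∈ K then 1 else 0)) := by
      simp only [hK, Finset.mem_Icc]
      split_ifs <;> omega
    have hb := h1 v
    show ∑ t ∈ Finset.range n, (N v t + add v t - sub v t) = d * cnt n w v
    omega
  · -- column counts
    intro t ht
    have hsum : ∑ v ∈ Finset.range (w 0 + 1), (N v t + add v t - sub v t)
        + ∑ v ∈ Finset.range (w 0 + 1), sub v t
        = ∑ v ∈ Finset.range (w 0 + 1), N v t + ∑ v ∈ Finset.range (w 0 + 1), add v t := by
      rw [← Finset.sum_add_distrib, ← Finset.sum_add_distrib]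
      refine Finset.sum_congr rfl fun v _ => ?_
      have := hsub_le v t
      omega
    have hsubcol : ∑ v ∈ Finset.range (w 0 + 1), sub v t
        = (if t = i then 1 else 0) + (if t = j then 1 else 0)
          + ∑ r ∈ K, (if t = tF r then 2 else 0) := by
      simp only [hsub]
      rw [Finset.sum_add_distrib, Finset.sum_add_distrib]
      congr 1
      · congr 1
        · rw [sum_ite_cond (Finset.range (w 0 + 1)) va 1 (t = i)]
          exact ite_mem_range va (w 0) 1 (t = i) hvaW
        · rw [sum_ite_cond (Finset.range (w 0 + 1)) ua 1 (t = j)]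
          exact ite_mem_range ua (w 0) 1 (t = j) huaW
      · rw [Finset.sum_comm]
        refine Finset.sum_congr rfl fun r hr => ?_
        rw [sum_ite_cond (Finset.range (w 0 + 1)) r 2 (t = tF r)]
        have := hKmem r hr
        have hrV : r ∈ Finset.range (w 0 + 1) := Finset.mem_range.2 (by omega)
        by_cases h : t = tF r <;> simp [h, hrV]
    have haddcol : ∑ v ∈ Finset.range (w 0 + 1), add v t
        = (if t = i then 1 else 0) + (if t = j then 1 else 0)
          + ∑ r ∈ K, (if t = tF r then 2 else 0) := by
      simp only [hadd]
      rw [Finset.sum_add_distrib, Finset.sum_add_distrib]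
      congr 1
      · congr 1
        · rw [sum_ite_cond (Finset.range (w 0 + 1)) (va - 1) 1 (t = i)]
          exact ite_mem_range (va - 1) (w 0) 1 (t = i) (by omega)
        · rw [sum_ite_cond (Finset.range (w 0 + 1)) (ua + 1) 1 (t = j)]
          exact ite_mem_range (ua + 1) (w 0) 1 (t = j) (by omega)
      · rw [Finset.sum_comm]
        refine Finset.sum_congr rfl fun r hr => ?_
        rw [Finset.sum_add_distrib]
        rw [sum_ite_cond (Finset.range (w 0 + 1)) (r + 1) 1 (t = tF r)]
        rw [sum_ite_cond (Finset.range (w 0 + 1)) (r - 1) 1 (t = tF r)]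
        have := hKmem r hr
        have h1V : r + 1 ∈ Finset.range (w 0 + 1) := Finset.mem_range.2 (by omega)
        have h2V : r - 1 ∈ Finset.range (w 0 + 1) := Finset.mem_range.2 (by omega)
        by_cases h : t = tF r <;> simp [h, h1V, h2V]
    have hb := h2 t ht
    show ∑ v ∈ Finset.range (w 0 + 1), (N v t + add v t - sub v t) = d
    omega
  · -- column values
    intro t ht
    have hsum : ∑ v ∈ Finset.range (w 0 + 1), v * (N v t + add v t - sub v t)
        + ∑ v ∈ Finset.range (w 0 + 1), v * sub v t
        = ∑ v ∈ Finset.range (w 0 + 1), v * N v t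
          + ∑ v ∈ Finset.range (w 0 + 1), v * add v t := by
      rw [← Finset.sum_add_distrib, ← Finset.sum_add_distrib]
      refine Finset.sum_congr rfl fun v _ => ?_
      have := hsub_le v t
      have e : v * (N v t + add v t - sub v t) + v * sub v t = v * (N v t + add v t) := by
        rw [← Nat.mul_add]
        congr 1
        omega
      rw [e, Nat.mul_add]
    have hsubval : ∑ v ∈ Finset.range (w 0 + 1), v * sub v t
        = (if t = i then va else 0) + (if t = j then ua else 0)
          + ∑ r ∈ K, (if t = tF r then 2 * r else 0) := by
      simp only [hsub]
      have hexp : ∀ v, v * ((if v = va ∧ t = i then 1 else 0) + (if v = ua ∧ t = j then 1 else 0)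
          + ∑ r ∈ K, (if v = r ∧ t = tF r then 2 else 0))
          = (if v = va ∧ t = i then v * 1 else 0) + (if v = ua ∧ t = j then v * 1 else 0)
            + ∑ r ∈ K, (if v = r ∧ t = tF r then v * 2 else 0) := by
        intro v
        rw [Nat.mul_add, Nat.mul_add, mulIteZero, mulIteZero, Finset.mul_sum]
        congr 1
        refine Finset.sum_congr rfl fun r _ => mulIteZero v 2 _
      rw [Finset.sum_congr rfl fun v _ => hexp v]
      rw [Finset.sum_add_distrib, Finset.sum_add_distrib]
      congr 1
      · congr 1
        · have : ∀ v ∈ Finset.range (w 0 + 1), (if v = va ∧ t = i then v * 1 else 0)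
              = (if v = va ∧ t = i then va else 0) := by
            intro v _
            by_cases h : v = va ∧ t = i
            · rw [if_pos h, if_pos h, h.1, Nat.mul_one]
            · rw [if_neg h, if_neg h]
          rw [Finset.sum_congr rfl this, sum_ite_cond (Finset.range (w 0 + 1)) va va (t = i)]
          exact ite_mem_range va (w 0) va (t = i) hvaW
        · have : ∀ v ∈ Finset.range (w 0 + 1), (if v = ua ∧ t = j then v * 1 else 0)
              = (if v = ua ∧ t = j then ua else 0) := by
            intro v _
            by_cases h : v = ua ∧ t = j
            · rw [if_pos h, if_pos h, h.1, Nat.mul_one]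
            · rw [if_neg h, if_neg h]
          rw [Finset.sum_congr rfl this, sum_ite_cond (Finset.range (w 0 + 1)) ua ua (t = j)]
          exact ite_mem_range ua (w 0) ua (t = j) huaW
      · rw [Finset.sum_comm]
        refine Finset.sum_congr rfl fun r hr => ?_
        have : ∀ v ∈ Finset.range (w 0 + 1), (if v = r ∧ t = tF r then v * 2 else 0)
            = (if v = r ∧ t = tF r then 2 * r else 0) := by
          intro v _
          by_cases h : v = r ∧ t = tF r
          · rw [if_pos h, if_pos h, h.1, Nat.mul_comm]
          · rw [if_neg h, if_neg h]
        rw [Finset.sum_congr rfl this, sum_ite_cond (Finset.range (w 0 + 1)) r (2 * r) (t = tF r)]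
        have := hKmem r hr
        have hrV : r ∈ Finset.range (w 0 + 1) := Finset.mem_range.2 (by omega)
        by_cases h : t = tF r <;> simp [h, hrV]
    have haddval : ∑ v ∈ Finset.range (w 0 + 1), v * add v t
        = (if t = i then va - 1 else 0) + (if t = j then ua + 1 else 0)
          + ∑ r ∈ K, (if t = tF r then 2 * r else 0) := by
      simp only [hadd]
      have hexp : ∀ v, v * ((if v = va - 1 ∧ t = i then 1 else 0)
          + (if v = ua + 1 ∧ t = j then 1 else 0)
          + ∑ r ∈ K, ((if v = r + 1 ∧ t = tF r then 1 else 0)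
            + (if v = r - 1 ∧ t = tF r then 1 else 0)))
          = (if v = va - 1 ∧ t = i then v * 1 else 0) + (if v = ua + 1 ∧ t = j then v * 1 else 0)
            + ∑ r ∈ K, ((if v = r + 1 ∧ t = tF r then v * 1 else 0)
              + (if v = r - 1 ∧ t = tF r then v * 1 else 0)) := by
        intro v
        rw [Nat.mul_add, Nat.mul_add, mulIteZero, mulIteZero, Finset.mul_sum]
        congr 1
        refine Finset.sum_congr rfl fun r _ => ?_
        rw [Nat.mul_add, mulIteZero, mulIteZero]
      rw [Finset.sum_congr rfl fun v _ => hexp v]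
      rw [Finset.sum_add_distrib, Finset.sum_add_distrib]
      congr 1
      · congr 1
        · have : ∀ v ∈ Finset.range (w 0 + 1), (if v = va - 1 ∧ t = i then v * 1 else 0)
              = (if v = va - 1 ∧ t = i then va - 1 else 0) := by
            intro v _
            by_cases h : v = va - 1 ∧ t = i
            · rw [if_pos h, if_pos h, h.1, Nat.mul_one]
            · rw [if_neg h, if_neg h]
          rw [Finset.sum_congr rfl this,
            sum_ite_cond (Finset.range (w 0 + 1)) (va - 1) (va - 1) (t = i)]
          exact ite_mem_range (va - 1) (w 0) (va - 1) (t = i) (by omega)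
        · have : ∀ v ∈ Finset.range (w 0 + 1), (if v = ua + 1 ∧ t = j then v * 1 else 0)
              = (if v = ua + 1 ∧ t = j then ua + 1 else 0) := by
            intro v _
            by_cases h : v = ua + 1 ∧ t = j
            · rw [if_pos h, if_pos h, h.1, Nat.mul_one]
            · rw [if_neg h, if_neg h]
          rw [Finset.sum_congr rfl this,
            sum_ite_cond (Finset.range (w 0 + 1)) (ua + 1) (ua + 1) (t = j)]
          exact ite_mem_range (ua + 1) (w 0) (ua + 1) (t = j) (by omega)
      · rw [Finset.sum_comm]
        refine Finset.sum_congr rfl fun r hr => ?_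
        rw [Finset.sum_add_distrib]
        have e1 : ∀ v ∈ Finset.range (w 0 + 1), (if v = r + 1 ∧ t = tF r then v * 1 else 0)
            = (if v = r + 1 ∧ t = tF r then r + 1 else 0) := by
          intro v _
          by_cases h : v = r + 1 ∧ t = tF r
          · rw [if_pos h, if_pos h, h.1, Nat.mul_one]
          · rw [if_neg h, if_neg h]
        have e2 : ∀ v ∈ Finset.range (w 0 + 1), (if v = r - 1 ∧ t = tF r then v * 1 else 0)
            = (if v = r - 1 ∧ t = tF r then r - 1 else 0) := by
          intro v _
          by_cases h : v = r - 1 ∧ t = tF r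
          · rw [if_pos h, if_pos h, h.1, Nat.mul_one]
          · rw [if_neg h, if_neg h]
        rw [Finset.sum_congr rfl e1, Finset.sum_congr rfl e2]
        rw [sum_ite_cond (Finset.range (w 0 + 1)) (r + 1) (r + 1) (t = tF r)]
        rw [sum_ite_cond (Finset.range (w 0 + 1)) (r - 1) (r - 1) (t = tF r)]
        have := hKmem r hr
        have h1V : r + 1 ∈ Finset.range (w 0 + 1) := Finset.mem_range.2 (by omega)
        have h2V : r - 1 ∈ Finset.range (w 0 + 1) := Finset.mem_range.2 (by omega)
        by_cases h : t = tF r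
        · rw [if_pos ⟨h1V, h⟩, if_pos ⟨h2V, h⟩, if_pos h]
          omega
        · rw [if_neg (fun hh => h hh.2), if_neg (fun hh => h hh.2), if_neg h]
    have hb := h3 t ht
    show ∑ v ∈ Finset.range (w 0 + 1), v * (N v t + add v t - sub v t)
        = if t = i then x i - 1 else if t = j then x j + 1 else x t
    by_cases hti : t = i
    · rw [if_pos hti]
      rw [hti] at hsum hsubval haddval hb ⊢
      rw [hsubval, haddval] at hsum
      rw [if_pos rfl, if_neg hij, if_pos rfl, if_neg hij] at hsum
      omega
    · rw [if_neg hti]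
      by_cases htj : t = j
      · rw [if_pos htj]
        rw [htj] at hsum hsubval haddval hb ⊢
        rw [hsubval, haddval] at hsum
        rw [if_neg (fun hh => hij hh.symm), if_pos rfl,
          if_neg (fun hh => hij hh.symm), if_pos rfl] at hsum
        omega
      · rw [if_neg htj]
        rw [hsubval, haddval] at hsum
        rw [if_neg hti, if_neg htj, if_neg hti, if_neg htj] at hsum
        omega

lemma goodN_base (n : ℕ) (w : ℕ → ℕ) (hw : PartitionOn n w) (d : ℕ) :
    GoodN n w d (fun t => d * w t) := by
  classical
  refine ⟨fun v t => if t < n ∧ w t = v then d else 0, ?_, ?_, ?_⟩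
  · intro v
    have h : ∀ t ∈ Finset.range n, (if t < n ∧ w t = v then d else 0)
        = if w t = v then d else 0 := by
      intro t ht
      rw [Finset.mem_range] at ht
      simp [ht]
    rw [Finset.sum_congr rfl h, ← Finset.sum_filter, Finset.sum_const, smul_eq_mul]
    rw [cnt, Nat.mul_comm]
  · intro t ht
    have hwt : w t ∈ Finset.range (w 0 + 1) := Finset.mem_range.2 (by
      have := hw.1 0 t (Nat.zero_le _); omega)
    have h : ∀ v ∈ Finset.range (w 0 + 1), (if t < n ∧ w t = v then d else 0)
        = if v = w t then d else 0 := by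
      intro v _
      refine if_congr ⟨fun hh => hh.2.symm, fun hh => ⟨ht, hh.symm⟩⟩ rfl rfl
    rw [Finset.sum_congr rfl h, Finset.sum_ite_eq' (Finset.range (w 0 + 1)) (w t) (fun _ => d),
      if_pos hwt]
  · intro t ht
    have hwt : w t ∈ Finset.range (w 0 + 1) := Finset.mem_range.2 (by
      have := hw.1 0 t (Nat.zero_le _); omega)
    have h : ∀ v ∈ Finset.range (w 0 + 1), v * (if t < n ∧ w t = v then d else 0)
        = if v = w t then v * d else 0 := by
      intro v _
      rw [mulIteZero]
      refine if_congr ⟨fun hh => hh.2.symm, fun hh => ⟨ht, hh.symm⟩⟩ rfl rfl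
    rw [Finset.sum_congr rfl h,
      Finset.sum_ite_eq' (Finset.range (w 0 + 1)) (w t) (fun v => v * d), if_pos hwt,
      Nat.mul_comm]

set_option maxHeartbeats 2000000 in
lemma chain (n : ℕ) (w : ℕ → ℕ) (hw : PartitionOn n w)
    (hstep : ∀ i, i + 1 < n → w i ≤ w (i + 1) + 1) (d : ℕ) (hd : n + 1 ≤ d) :
    ∀ (Kb : ℕ) (B : ℕ → ℕ), PartitionOn n B →
      (∀ t, t ≤ n → ∑ s ∈ Finset.range t, B s ≤ d * ∑ s ∈ Finset.range t, w s) →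
      (∑ s ∈ Finset.range n, B s = d * ∑ s ∈ Finset.range n, w s) →
      (∑ t ∈ Finset.range (n+1),
        (d * ∑ s ∈ Finset.range t, w s - ∑ s ∈ Finset.range t, B s)) < Kb →
      GoodN n w d B := by
  classical
  intro Kb
  induction Kb with
  | zero => intro B _ _ _ h; omega
  | succ Kb ih =>
    intro B hB hheads htot hPhi
    by_cases hBW : ∀ s, s < n → B s = d * w s
    · exact GoodN_congr n w d _ B (fun t ht => (hBW t ht).symm) (goodN_base n w hw d)
    · push_neg at hBW
      have hexP : ∃ s, B s ≠ d * w s := by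
        obtain ⟨s, h1, h2⟩ := hBW
        exact ⟨s, h2⟩
      obtain ⟨i, hiP, himin⟩ : ∃ i, B i ≠ d * w i ∧ ∀ s, s < i → B s = d * w s :=
        ⟨Nat.find hexP, Nat.find_spec hexP, fun s hs => by
          have := Nat.find_min hexP hs
          simpa using this⟩
      have hi_lt : i < n := by
        by_contra h
        push_neg at h
        have h1 : B i = 0 := hB.2 i h
        have h2 : w i = 0 := hw.2 i h
        rw [h1, h2] at hiP
        simp at hiP
      have hhead_i : ∑ s ∈ Finset.range i, B s = d * ∑ s ∈ Finset.range i, w s := by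
        rw [Finset.mul_sum]
        exact Finset.sum_congr rfl fun s hs => himin s (Finset.mem_range.1 hs)
      have hBi : B i + 1 ≤ d * w i := by
        have h1 := hheads (i+1) (by omega)
        rw [Finset.sum_range_succ, Finset.sum_range_succ, Nat.mul_add] at h1
        omega
      have hexQ : ∃ s, d * w s < B s := by
        by_contra h
        push_neg at h
        have heq : ∀ s ∈ Finset.range n, B s = d * w s := by
          rw [← Finset.sum_eq_sum_iff_of_le (fun s _ => h s)]
          rw [htot, Finset.mul_sum]
        exact hiP (heq i (Finset.mem_range.2 hi_lt))
      obtain ⟨j, hjP, hjmin⟩ : ∃ j, d * w j < B j ∧ ∀ s, s < j → B s ≤ d * w s :=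
        ⟨Nat.find hexQ, Nat.find_spec hexQ, fun s hs => by
          have := Nat.find_min hexQ hs
          omega⟩
      have hij : i < j := by
        rcases Nat.lt_trichotomy i j with h | h | h
        · exact h
        · exfalso
          rw [h] at hBi
          omega
        · exfalso
          have := himin j h
          omega
      have hj_lt : j < n := by
        by_contra h
        push_neg at h
        have h1 : B j = 0 := hB.2 j h
        omega
      obtain ⟨q, hq1, hqge, hq_le, hqmax⟩ : ∃ q, B q = B j ∧ j ≤ q ∧ q ≤ n - 1 ∧
          ∀ s, q < s → s ≤ n - 1 → B s ≠ B j :=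
        ⟨Nat.findGreatest (fun s => B s = B j) (n-1),
          Nat.findGreatest_spec (P := fun s => B s = B j) (m := j) (by omega) rfl,
          Nat.le_findGreatest (P := fun s => B s = B j) (by omega) rfl,
          Nat.findGreatest_le (n-1),
          fun s hs1 hs2 => Nat.findGreatest_is_greatest (P := fun s => B s = B j) hs1 hs2⟩
      have hq_lt : q < n := by omega
      have hBq1 : 1 ≤ B q := by omega
      have hqsucc : B (q+1) < B q := by
        by_cases h : q + 1 < n
        · have hne : B (q+1) ≠ B j := hqmax (q+1) (by omega) (by omega)
          have := hB.1 q (q+1) (by omega)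
          omega
        · have : B (q+1) = 0 := hB.2 (q+1) (by omega)
          omega
      have hconst : ∀ s, j ≤ s → s ≤ q → B s = B j := by
        intro s h1 h2
        have e1 := hB.1 j s h1
        have e2 := hB.1 s q h2
        omega
      have hstrict : ∀ t, i + 1 ≤ t → t ≤ q →
          ∑ s ∈ Finset.range t, B s + 1 ≤ d * ∑ s ∈ Finset.range t, w s := by
        intro t ht1 ht2
        rcases le_or_gt t j with h | h
        · have hsplitB : ∑ s ∈ Finset.range t, B s
              = ∑ s ∈ Finset.range (i+1), B s + ∑ s ∈ Finset.Ico (i+1) t, B s := by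
            rw [Finset.range_eq_Ico, Finset.range_eq_Ico]
            exact (Finset.sum_Ico_consecutive B (Nat.zero_le _) (by omega)).symm
          have hsplitW : ∑ s ∈ Finset.range t, w s
              = ∑ s ∈ Finset.range (i+1), w s + ∑ s ∈ Finset.Ico (i+1) t, w s := by
            rw [Finset.range_eq_Ico, Finset.range_eq_Ico]
            exact (Finset.sum_Ico_consecutive w (Nat.zero_le _) (by omega)).symm
          have e3 : ∑ s ∈ Finset.Ico (i+1) t, B s ≤ d * ∑ s ∈ Finset.Ico (i+1) t, w s := by
            rw [Finset.mul_sum]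
            refine Finset.sum_le_sum fun s hs => ?_
            rw [Finset.mem_Ico] at hs
            exact hjmin s (by omega)
          have e9 : ∑ s ∈ Finset.range (i+1), B s = ∑ s ∈ Finset.range i, B s + B i :=
            Finset.sum_range_succ B i
          have key : d * ∑ s ∈ Finset.range t, w s
              = d * ∑ s ∈ Finset.range i, w s + d * w i + d * ∑ s ∈ Finset.Ico (i+1) t, w s := by
            rw [hsplitW, Finset.sum_range_succ w i]
            ring
          omega
        · by_contra hcon
          push_neg at hcon
          have heq : ∑ s ∈ Finset.range t, B s = d * ∑ s ∈ Finset.range t, w s := by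
            have := hheads t (by omega)
            omega
          have hBt : d * w t < B t := by
            have h1 : B t = B j := hconst t (by omega) ht2
            have h2 : w t ≤ w j := hw.1 j t (by omega)
            have h3 : d * w t ≤ d * w j := Nat.mul_le_mul_left d h2
            omega
          have h4 := hheads (t+1) (by omega)
          rw [Finset.sum_range_succ, Finset.sum_range_succ, Nat.mul_add] at h4
          omega
      set B' : ℕ → ℕ := fun s => if s = i then B s + 1 else if s = q then B s - 1 else B s
        with hB'def
      have hB'i : B' i = B i + 1 := by simp only [hB'def, if_pos rfl]
      have hiq : i ≠ q := by omega
      have hB'q : B' q = B q - 1 := by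
        simp only [hB'def]
        rw [if_neg (fun h => hiq h.symm)]
        simp
      have hB'o : ∀ s, s ≠ i → s ≠ q → B' s = B s := by
        intro s h1 h2
        simp only [hB'def]
        rw [if_neg h1, if_neg h2]
      have hB'P : PartitionOn n B' := by
        constructor
        · have hadj : ∀ s, B' (s+1) ≤ B' s := by
            intro s
            by_cases hsi : s = i
            · have ha : B (s+1) ≤ B s := hB.1 s (s+1) (by omega)
              have h1 : B' (s+1) ≤ B (s+1) := by
                simp only [hB'def]
                split_ifs <;> omega
              have h2 : B' s = B s + 1 := by
                simp only [hB'def]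
                rw [if_pos hsi]
              omega
            · rcases eq_or_ne (s+1) i with hei | hnei
              · have h2 : B s = d * w s := himin s (by omega)
                have h4 : d * w i ≤ d * w s := Nat.mul_le_mul_left d (hw.1 s i (by omega))
                have e1 : B' s = B s := hB'o s hsi (by omega)
                have e2 : B' (s+1) = B (s+1) + 1 := by
                  simp only [hB'def]
                  rw [if_pos hei]
                rw [hei] at e2
                rw [hei, e2, e1]
                omega
              · by_cases hsq : s = q
                · have e1 : B' s = B s - 1 := by
                    simp only [hB'def]
                    rw [if_neg hsi, if_pos hsq]
                  have e2 : B' (s+1) = B (s+1) := hB'o (s+1) hnei (by omega)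
                  have e3 : B (s+1) < B s := by
                    rw [hsq]
                    exact hqsucc
                  omega
                · have e1 : B' s = B s := hB'o s hsi hsq
                  have e2 : B' (s+1) ≤ B (s+1) := by
                    simp only [hB'def]
                    split_ifs <;> omega
                  have ha : B (s+1) ≤ B s := hB.1 s (s+1) (by omega)
                  omega
          intro a b hab
          have : ∀ k, B' (a + k) ≤ B' a := by
            intro k
            induction k with
            | zero => simp
            | succ k ihk => exact le_trans (by rw [← Nat.add_assoc]; exact hadj (a+k)) ihk
          have := this (b - a)
          rwa [Nat.add_sub_cancel' hab] at this
        · intro s hs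
          have e1 : B' s = B s := hB'o s (by omega) (by omega)
          rw [e1]
          exact hB.2 s hs
      have hheadcomp : ∀ t, t ≤ n →
          (t ≤ i → ∑ s ∈ Finset.range t, B' s = ∑ s ∈ Finset.range t, B s) ∧
          (i < t → t ≤ q → ∑ s ∈ Finset.range t, B' s = ∑ s ∈ Finset.range t, B s + 1) ∧
          (q < t → ∑ s ∈ Finset.range t, B' s = ∑ s ∈ Finset.range t, B s) := by
        intro t htn
        refine ⟨?_, ?_, ?_⟩
        · intro h
          refine Finset.sum_congr rfl fun s hs => ?_
          rw [Finset.mem_range] at hs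
          exact hB'o s (by omega) (by omega)
        · intro h1 h2
          have hptw : ∀ s ∈ Finset.range t, B' s = B s + (if s = i then 1 else 0) := by
            intro s hs
            rw [Finset.mem_range] at hs
            by_cases hsi : s = i
            · rw [if_pos hsi]
              simp only [hB'def]
              rw [if_pos hsi]
            · rw [if_neg hsi, hB'o s hsi (by omega)]
              omega
          rw [Finset.sum_congr rfl hptw, Finset.sum_add_distrib,
            Finset.sum_ite_eq' (Finset.range t) i (fun _ => 1),
            if_pos (Finset.mem_range.2 (by omega))]
        · intro h
          have hptw : ∀ s ∈ Finset.range t,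
              B' s + (if s = q then 1 else 0) = B s + (if s = i then 1 else 0) := by
            intro s hs
            by_cases hsq : s = q
            · have e : B' s = B s - 1 := by
                simp only [hB'def]
                rw [if_neg (by omega : ¬s = i), if_pos hsq]
              have hBs : 1 ≤ B s := by rw [hsq]; exact hBq1
              rw [if_pos hsq, if_neg (by omega : ¬s = i)]
              omega
            · by_cases hsi : s = i
              · have e : B' s = B s + 1 := by
                  simp only [hB'def]
                  rw [if_pos hsi]
                rw [if_neg hsq, if_pos hsi]
                omega
              · rw [if_neg hsq, if_neg hsi, hB'o s hsi hsq]
          have hsums : ∑ s ∈ Finset.range t, B' s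
              + ∑ s ∈ Finset.range t, (if s = q then 1 else 0)
              = ∑ s ∈ Finset.range t, B s
              + ∑ s ∈ Finset.range t, (if s = i then 1 else 0) := by
            rw [← Finset.sum_add_distrib, ← Finset.sum_add_distrib]
            exact Finset.sum_congr rfl hptw
          rw [Finset.sum_ite_eq' (Finset.range t) q (fun _ => 1),
            Finset.sum_ite_eq' (Finset.range t) i (fun _ => 1),
            if_pos (Finset.mem_range.2 (by omega)), if_pos (Finset.mem_range.2 (by omega))]
            at hsums
          omega
      have hheads' : ∀ t, t ≤ n →
          ∑ s ∈ Finset.range t, B' s ≤ d * ∑ s ∈ Finset.range t, w s := by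
        intro t htn
        obtain ⟨c1, c2, c3⟩ := hheadcomp t htn
        rcases le_or_gt t i with h | h
        · rw [c1 h]; exact hheads t htn
        · rcases le_or_gt t q with h2 | h2
          · rw [c2 h h2]
            exact hstrict t (by omega) h2
          · rw [c3 h2]; exact hheads t htn
      have htot' : ∑ s ∈ Finset.range n, B' s = d * ∑ s ∈ Finset.range n, w s := by
        obtain ⟨_, _, c3⟩ := hheadcomp n (le_refl n)
        rw [c3 (by omega)]
        exact htot
      have hPhi' : ∑ t ∈ Finset.range (n+1),
          (d * ∑ s ∈ Finset.range t, w s - ∑ s ∈ Finset.range t, B' s)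
          < ∑ t ∈ Finset.range (n+1),
          (d * ∑ s ∈ Finset.range t, w s - ∑ s ∈ Finset.range t, B s) := by
        refine Finset.sum_lt_sum ?_ ⟨i+1, Finset.mem_range.2 (by omega), ?_⟩
        · intro t ht
          rw [Finset.mem_range] at ht
          obtain ⟨c1, c2, c3⟩ := hheadcomp t (by omega)
          rcases le_or_gt t i with h | h
          · rw [c1 h]
          · rcases le_or_gt t q with h2 | h2
            · rw [c2 h h2]; omega
            · rw [c3 h2]
        · obtain ⟨c1, c2, c3⟩ := hheadcomp (i+1) (by omega)
          rw [c2 (by omega) (by omega)]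
          have := hstrict (i+1) (by omega) (by omega)
          omega
      have hgood' : GoodN n w d B' := ih B' hB'P hheads' htot' (by omega)
      have hgtBq : B' q < B' i := by
        have : B j ≤ B i := hB.1 i j (by omega)
        omega
      have hmv := move n w hw hstep d hd B' i q hi_lt hq_lt hiq hgtBq hgood'
      refine GoodN_congr n w d _ B ?_ hmv
      intro t ht
      rcases eq_or_ne t i with rfl | hti
      · rw [if_pos rfl, hB'i]
        omega
      · rcases eq_or_ne t q with rfl | htq
        · rw [if_neg hti, if_pos rfl, hB'q]
          omega
        · rw [if_neg hti, if_neg htq]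
          exact hB'o t hti htq


theorem stmtAux (n : ℕ) (w : ℕ → ℕ) (hw : PartitionOn n w)
    (hstep : ∀ i, i + 1 < n → w i ≤ w (i + 1) + 1) :
    ∀ d, n + 1 ≤ d →
      XwPow n d w = { C | PartitionOn n C ∧
        (∑ s ∈ Finset.range n, C s) = d * (∑ s ∈ Finset.range n, w s) ∧
        ∀ i < n, d * (∑ j ∈ Finset.Ico i n, w j) ≤ ∑ j ∈ Finset.Ico i n, C j } := by
  intro d hd
  ext C
  constructor
  · rintro ⟨hC, σ, hσ⟩
    have htoteq : ∑ s ∈ Finset.range n, C s = d * ∑ s ∈ Finset.range n, w s :=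
      total_eq n d w C σ hσ
    refine ⟨hC, htoteq, fun i hi => ?_⟩
    have hsplitC : ∑ s ∈ Finset.range i, C s + ∑ s ∈ Finset.Ico i n, C s
        = ∑ s ∈ Finset.range n, C s := by
      rw [Finset.range_eq_Ico, Finset.range_eq_Ico]
      exact Finset.sum_Ico_consecutive C (Nat.zero_le _) (by omega)
    have hsplitW : ∑ s ∈ Finset.range i, w s + ∑ s ∈ Finset.Ico i n, w s
        = ∑ s ∈ Finset.range n, w s := by
      rw [Finset.range_eq_Ico, Finset.range_eq_Ico]
      exact Finset.sum_Ico_consecutive w (Nat.zero_le _) (by omega)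
    have hmul : d * ∑ s ∈ Finset.range n, w s
        = d * ∑ s ∈ Finset.range i, w s + d * ∑ s ∈ Finset.Ico i n, w s := by
      rw [← hsplitW, Nat.mul_add]
    have hhead := heads_le n d w C hw σ hσ i (by omega)
    omega
  · rintro ⟨hC, htoteq, htails⟩
    have hheads : ∀ t, t ≤ n →
        ∑ s ∈ Finset.range t, C s ≤ d * ∑ s ∈ Finset.range t, w s := by
      intro t ht
      rcases eq_or_lt_of_le ht with rfl | htlt
      · omega
      · have hsplitC : ∑ s ∈ Finset.range t, C s + ∑ s ∈ Finset.Ico t n, C s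
            = ∑ s ∈ Finset.range n, C s := by
          rw [Finset.range_eq_Ico, Finset.range_eq_Ico]
          exact Finset.sum_Ico_consecutive C (Nat.zero_le _) (by omega)
        have hsplitW : ∑ s ∈ Finset.range t, w s + ∑ s ∈ Finset.Ico t n, w s
            = ∑ s ∈ Finset.range n, w s := by
          rw [Finset.range_eq_Ico, Finset.range_eq_Ico]
          exact Finset.sum_Ico_consecutive w (Nat.zero_le _) (by omega)
        have hmul : d * ∑ s ∈ Finset.range n, w s
            = d * ∑ s ∈ Finset.range t, w s + d * ∑ s ∈ Finset.Ico t n, w s := by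
          rw [← hsplitW, Nat.mul_add]
        have := htails t htlt
        omega
    have hgood : GoodN n w d C :=
      chain n w hw hstep d hd
        (∑ t ∈ Finset.range (n+1),
          (d * ∑ s ∈ Finset.range t, w s - ∑ s ∈ Finset.range t, C s) + 1)
        C hC hheads htoteq (by omega)
    obtain ⟨σ, hσ⟩ := decomp n w hw d C hgood
    exact ⟨hC, σ, hσ⟩

theorem stmt_15 (n : ℕ) (w : ℕ → ℕ) (hw : PartitionOn n w) (hw0 : ∃ i, w i ≠ 0)
    (hstep : ∀ i, i + 1 < n → w i ≤ w (i + 1) + 1) :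
    ∃ D : ℕ, ∀ d, D ≤ d →
      XwPow n d w = { C | PartitionOn n C ∧ psize n C = d * psize n w ∧
        ∀ i < n, d * (∑ j ∈ Finset.Ico i n, w j) ≤ ∑ j ∈ Finset.Ico i n, C j } :=
  ⟨n + 1, fun d hd => stmtAux n w hw hstep d hd⟩
end

section
/- Let 1 ≤ p ≤ n and let Y ⊆ P_n be a set of partitions containing (1^p). Then every (z,l) ∈ Z(Y) satisfies z_p = 0, i.e. z has at most p−1 nonzero parts. -/
open MvPolynomial

theorem stmt_16 (n p : ℕ) (hp : 1 ≤ p) (hpn : p ≤ n)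
    (Y : Set (ℕ → ℕ)) (hY : ∀ x ∈ Y, PartitionOn n x) (hmem : rect p 1 ∈ Y) :
    ∀ zl ∈ ZX n Y, zl.1 (p - 1) = 0 := by
  rintro ⟨z, l⟩ ⟨hz, -, hall⟩
  dsimp only at hz hall ⊢
  by_cases hc : z 0 = 0
  · have := hz.1 0 (p - 1) (Nat.zero_le _)
    omega
  · have hset : {j : ℕ | z 0 + 1 ≤ rect p 1 j} = ∅ := by
      ext j
      simp only [rect, Set.mem_setOf_eq, Set.mem_empty_iff_false, iff_false]
      split <;> omega
    have hconj : conj (rect p 1) (z 0 + 1) = 0 := by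
      rw [conj, hset, Set.ncard_empty]
    have hnot : ¬ trunc (rect p 1) (z 0) ≤ z := by
      intro hle
      have := hall (rect p 1) hmem hle (by omega)
      omega
    rw [Pi.le_def] at hnot
    push_neg at hnot
    obtain ⟨i, hi⟩ := hnot
    simp only [trunc, rect] at hi
    have hip : i < p := by
      by_contra h
      simp [h] at hi
    rw [if_pos hip] at hi
    have hz0 : z i = 0 := by omega
    have := hz.1 i (p - 1) (by omega)
    omega
end

section
/- Let Y be a set of partitions containing (1^p) for some p ≥ 1. For all integers n' ≥ n ≥ p, identifying P_n with a subset of P_{n'} by appending zeros, one has Z(Y_n) = Z(Y_{n'}); in particular, every (z,l) ∈ Z(Y_{n'}) has z with at most p−1 nonzero parts, and Z(Y_n) is independent of n for n ≥ p. -/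
open MvPolynomial

lemma conj_le_of_supp (x : ℕ → ℕ) (N : ℕ) (hN : ∀ i, N ≤ i → x i = 0) (t : ℕ) (ht : 1 ≤ t) :
    conj x t ≤ N := by
  have hsub : {j : ℕ | t ≤ x j} ⊆ Set.Iio N := by
    intro j hj
    by_contra h
    simp only [Set.mem_Iio, not_lt] at h
    have := hN j h
    simp only [Set.mem_setOf_eq] at hj
    omega
  calc conj x t ≤ (Set.Iio N).ncard := Set.ncard_le_ncard hsub (Set.finite_Iio N)
    _ = N := by rw [← Finset.coe_range, Set.ncard_coe_finset, Finset.card_range]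

lemma supp_of_conj (x : ℕ → ℕ) (hdec : ∀ i j : ℕ, i ≤ j → x j ≤ x i)
    (N : ℕ) (hN : ∀ i, N ≤ i → x i = 0) (m : ℕ) (h : conj x 1 ≤ m) :
    ∀ i, m ≤ i → x i = 0 := by
  intro i hi
  by_contra hx
  have hx1 : 1 ≤ x i := by omega
  have hfin : ({j : ℕ | 1 ≤ x j}).Finite := by
    apply Set.Finite.subset (Set.finite_Iio N)
    intro j hj
    simp only [Set.mem_setOf_eq] at hj
    simp only [Set.mem_Iio]
    by_contra h'
    have := hN j (by omega)
    omega
  have hsub : Set.Iio (i + 1) ⊆ {j : ℕ | 1 ≤ x j} := by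
    intro j hj
    simp only [Set.mem_Iio] at hj
    exact le_trans hx1 (hdec j i (by omega))
  have : i + 1 ≤ conj x 1 := by
    calc i + 1 = (Set.Iio (i + 1)).ncard := by
          rw [← Finset.coe_range, Set.ncard_coe_finset, Finset.card_range]
      _ ≤ conj x 1 := Set.ncard_le_ncard hsub hfin
  omega

lemma conj_rect_one (p : ℕ) : conj (rect p 1) 1 = p := by
  have : {j : ℕ | 1 ≤ rect p 1 j} = Set.Iio p := by
    ext j
    simp only [Set.mem_setOf_eq, Set.mem_Iio, rect]
    split <;> omega
  rw [conj, this, ← Finset.coe_range, Set.ncard_coe_finset, Finset.card_range]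

lemma conj_rect_big (p c : ℕ) (hc : 1 ≤ c) : conj (rect p 1) (c + 1) = 0 := by
  have : {j : ℕ | c + 1 ≤ rect p 1 j} = ∅ := by
    ext j
    simp only [Set.mem_setOf_eq, Set.mem_empty_iff_false, iff_false, not_le, rect]
    split <;> omega
  rw [conj, this, Set.ncard_empty]

lemma rect_mem_restr (p m : ℕ) (h : p ≤ m) (Y : Set (ℕ → ℕ)) (hmem : rect p 1 ∈ Y) :
    rect p 1 ∈ restr Y m := by
  refine ⟨hmem, fun i hi => ?_⟩
  simp only [rect]
  split <;> omega

lemma zsupp (p m : ℕ) (hp : 1 ≤ p) (hpm : p ≤ m) (Y : Set (ℕ → ℕ)) (hmem : rect p 1 ∈ Y)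
    (z : ℕ → ℕ) (l : ℕ) (h : (z, l) ∈ ZX m (restr Y m)) : ∀ i, p - 1 ≤ i → z i = 0 := by
  obtain ⟨hz, _, hall⟩ := h
  dsimp only at hz hall
  by_cases hc : z 0 = 0
  · intro i _
    have := hz.1 0 i (Nat.zero_le _)
    omega
  · have hc1 : 1 ≤ z 0 := by omega
    have hx0 : rect p 1 ∈ restr Y m := rect_mem_restr p m hpm Y hmem
    have hconj : conj (rect p 1) (z 0 + 1) = 0 := conj_rect_big p (z 0) hc1
    have hnt : ¬ trunc (rect p 1) (z 0) ≤ z := by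
      intro ht
      have := hall (rect p 1) hx0 ht (by simp [hconj])
      omega
    rw [Pi.le_def] at hnt
    push_neg at hnt
    obtain ⟨i, hi⟩ := hnt
    simp only [trunc, rect] at hi
    have hip : i < p := by by_contra h'; simp only [if_neg (by omega : ¬ i < p)] at hi; omega
    rw [if_pos hip] at hi
    have hzi : z i = 0 := by omega
    intro j hj
    have := hz.1 i j (by omega)
    omega

theorem stmt_17 (p : ℕ) (hp : 1 ≤ p) (Y : Set (ℕ → ℕ)) (hY : ∀ x ∈ Y, IsPartitionF x)
    (hmem : rect p 1 ∈ Y) :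
    ∀ n n' : ℕ, p ≤ n → n ≤ n' →
      ZX n (restr Y n) = ZX n' (restr Y n') ∧
        ∀ zl ∈ ZX n' (restr Y n'), ∀ i, p - 1 ≤ i → zl.1 i = 0 := by
  intro n n' hpn hnn'
  have hpn' : p ≤ n' := le_trans hpn hnn'
  constructor
  · ext ⟨z, l⟩
    constructor
    · rintro ⟨hz, ⟨x0, hx0, ht0, hc0⟩, hall⟩
      have S : ∀ i, p - 1 ≤ i → z i = 0 :=
        zsupp p n hp hpn Y hmem z l ⟨hz, ⟨x0, hx0, ht0, hc0⟩, hall⟩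
      dsimp only at hz hall ht0 hc0
      refine ⟨⟨hz.1, fun i hi => S i (by omega)⟩,
        ⟨x0, ⟨hx0.1, fun i hi => hx0.2 i (by omega)⟩, ht0, hc0⟩, ?_⟩
      intro x hx ht hc
      dsimp only at ht hc
      obtain ⟨hdec, N, hN⟩ := hY x hx.1
      have hxn : ∀ i, n ≤ i → x i = 0 := by
        by_cases hzc : z 0 = 0
        · have h1 : conj x0 (z 0 + 1) = l + 1 := hall x0 hx0 ht0 hc0
          have h2 : conj x0 (z 0 + 1) ≤ n := by
            rw [hzc, zero_add]; exact conj_le_of_supp x0 n hx0.2 1 le_rfl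
          rw [hzc, zero_add] at hc
          exact fun i hi => supp_of_conj x hdec N hN n (by omega) i hi
        · intro i hi
          have hzi : z i = 0 := S i (by omega)
          have := ht i
          simp only [trunc] at this
          omega
      exact hall x ⟨hx.1, hxn⟩ ht hc
    · rintro ⟨hz, ⟨x0, hx0, ht0, hc0⟩, hall⟩
      have S : ∀ i, p - 1 ≤ i → z i = 0 :=
        zsupp p n' hp hpn' Y hmem z l ⟨hz, ⟨x0, hx0, ht0, hc0⟩, hall⟩
      dsimp only at hz hall ht0 hc0
      obtain ⟨hdec0, N0, hN0⟩ := hY x0 hx0.1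
      have hx0n : ∀ i, n ≤ i → x0 i = 0 := by
        by_cases hzc : z 0 = 0
        · have h1 : conj x0 (z 0 + 1) = l + 1 := hall x0 hx0 ht0 hc0
          have hln : l + 1 ≤ n := by
            by_cases hpl : p ≤ l + 1
            · have hr : conj (rect p 1) (z 0 + 1) = l + 1 := by
                apply hall (rect p 1) (rect_mem_restr p n' hpn' Y hmem)
                · intro i; simp [trunc, hzc]
                · rw [hzc, zero_add, conj_rect_one]; omega
              rw [hzc, zero_add, conj_rect_one] at hr
              omega
            · omega
          rw [hzc, zero_add] at h1
          exact fun i hi => supp_of_conj x0 hdec0 N0 hN0 n (by omega) i hi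
        · intro i hi
          have hzi : z i = 0 := S i (by omega)
          have := ht0 i
          simp only [trunc] at this
          omega
      refine ⟨⟨hz.1, fun i hi => S i (by omega)⟩, ⟨x0, ⟨hx0.1, hx0n⟩, ht0, hc0⟩, ?_⟩
      intro x hx ht hc
      exact hall x ⟨hx.1, fun i hi => hx.2 i (by omega)⟩ ht hc
  · rintro ⟨z, l⟩ hzl i hi
    exact zsupp p n' hp hpn' Y hmem z l hzl i hi
end

section
/- Let m ≥ 1 and w ≥ 1 be integers with n ≥ m. Let z ∈ P_n with z_m ≥ w−1, and let x ∈ P_n with at most m nonzero parts. Set c = z_1, d = c − (w−1), u = z − z(w−1) (i.e. u_i = max(z_i − (w−1), 0)), and y = x − x(w−1). Then x'_{c+1} = y'_{d+1}, and z ≥ x(c) if and only if u ≥ y(d). -/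
open MvPolynomial

theorem stmt_18 (n m w : ℕ) (hm : 1 ≤ m) (hw : 1 ≤ w) (hmn : m ≤ n)
    (z : ℕ → ℕ) (hz : PartitionOn n z) (hzm : w - 1 ≤ z (m - 1))
    (x : ℕ → ℕ) (hx : PartitionOn n x) (hxm : ∀ i, m ≤ i → x i = 0) :
    conj x (z 0 + 1) = conj (fun i => x i - (w - 1)) ((z 0 - (w - 1)) + 1) ∧
      (trunc x (z 0) ≤ z ↔
        trunc (fun i => x i - (w - 1)) (z 0 - (w - 1)) ≤ (fun i => z i - (w - 1))) := by
  obtain ⟨hzd, hzn⟩ := hz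
  have hc : w - 1 ≤ z 0 := le_trans hzm (hzd 0 (m - 1) (Nat.zero_le _))
  constructor
  · unfold conj
    congr 1
    ext j
    simp only [Set.mem_setOf_eq]
    omega
  · simp only [Pi.le_def, trunc]
    constructor
    · intro h i
      by_cases him : i < m
      · have hzi : w - 1 ≤ z i := le_trans hzm (hzd i (m - 1) (by omega))
        have := h i
        omega
      · have h0 : x i = 0 := hxm i (by omega)
        simp [h0]
    · intro h i
      have hi := h i
      by_cases him : i < m
      · have hzi : w - 1 ≤ z i := le_trans hzm (hzd i (m - 1) (by omega))
        omega
      · have h0 : x i = 0 := hxm i (by omega)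
        simp [h0]
end

section
/- Let X be a finite nonempty set of pairwise incomparable nonzero partitions (no two distinct x,y ∈ X satisfy x ≥ y componentwise). Define m = max{i : x_i ≠ 0 for some x ∈ X}, w = min{x_1 : x ∈ X}, W = max{x_1 : x ∈ X}, and Y = {x − x(w−1) : x ∈ X}. Let C = max{|u| + l + 1 : (u,l) ∈ Z(Y_m)}. Then: (1) max{|u| + l + 1 : (u,l) ∈ Z(Y_n)} = C for all n ≥ m; and (2) max{|z| + l + 1 : (z,l) ∈ Z(X_n)} = (w−1)·n + C for all n ≥ max(m, (m−1)·(W−w+2) − C). -/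
open MvPolynomial

lemma conj_le_of_supp_s19 {x : ℕ → ℕ} {m k : ℕ} (h : ∀ i, m ≤ i → x i = 0) (hk : 1 ≤ k) :
    conj x k ≤ m := by
  have hsub : {j : ℕ | k ≤ x j} ⊆ Set.Iio m := by
    intro j hj
    simp only [Set.mem_setOf_eq] at hj
    simp only [Set.mem_Iio]
    by_contra h'
    have := h j (le_of_not_gt h')
    omega
  calc conj x k ≤ (Set.Iio m).ncard := Set.ncard_le_ncard hsub (Set.finite_Iio m)
    _ = m := by rw [← Finset.coe_range, Set.ncard_coe_finset, Finset.card_range]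

lemma conj_eq_zero' {x : ℕ → ℕ} {k : ℕ} (h : ∀ j, x j < k) : conj x k = 0 := by
  have he : {j : ℕ | k ≤ x j} = ∅ := by
    ext j
    simp only [Set.mem_setOf_eq, Set.mem_empty_iff_false, iff_false]
    have := h j; omega
  rw [conj, he, Set.ncard_empty]

lemma conj_ge' {x : ℕ → ℕ} (hdec : ∀ i j : ℕ, i ≤ j → x j ≤ x i) {k l : ℕ}
    (hc : conj x k = l + 1) : k ≤ x l := by
  by_contra hlt
  push_neg at hlt
  have hsub : {j : ℕ | k ≤ x j} ⊆ Set.Iio l := by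
    intro j hj
    simp only [Set.mem_setOf_eq] at hj
    simp only [Set.mem_Iio]
    by_contra h'
    have := hdec l j (le_of_not_gt h')
    omega
  have h2 := Set.ncard_le_ncard hsub (Set.finite_Iio l)
  rw [conj] at hc
  rw [hc] at h2
  have h3 : (Set.Iio l).ncard = l := by
    rw [← Finset.coe_range, Set.ncard_coe_finset, Finset.card_range]
  omega

lemma psize_eq' {x : ℕ → ℕ} {m n : ℕ} (h : m ≤ n) (h0 : ∀ i, m ≤ i → x i = 0) :
    psize n x = psize m x := by
  unfold psize
  exact (Finset.sum_subset (Finset.range_subset_range.2 h)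
    (fun i _ hni => h0 i (by simpa using hni))).symm

set_option maxHeartbeats 1000000 in
theorem stmt_19 (Xs : Set (ℕ → ℕ)) (hfin : Xs.Finite) (hne : Xs.Nonempty)
    (hpart : ∀ x ∈ Xs, IsPartitionF x) (hnz : ∀ x ∈ Xs, ∃ i, x i ≠ 0)
    (hinc : ∀ x ∈ Xs, ∀ y ∈ Xs, x ≠ y → ¬ ∀ i, y i ≤ x i)
    (m w W C : ℕ) (hm0 : 1 ≤ m)
    (hm1 : ∀ x ∈ Xs, ∀ i, m ≤ i → x i = 0) (hm2 : ∃ x ∈ Xs, x (m - 1) ≠ 0)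
    (hw1 : ∀ x ∈ Xs, w ≤ x 0) (hw2 : ∃ x ∈ Xs, x 0 = w)
    (hW1 : ∀ x ∈ Xs, x 0 ≤ W) (hW2 : ∃ x ∈ Xs, x 0 = W)
    (hC : IsGreatest { v : ℕ |
        ∃ zl ∈ ZX m (restr ((fun x => fun i => x i - (w - 1)) '' Xs) m),
          v = psize m zl.1 + zl.2 + 1 } C) :
    (∀ n, m ≤ n →
      IsGreatest { v : ℕ |
          ∃ zl ∈ ZX n (restr ((fun x => fun i => x i - (w - 1)) '' Xs) n),
            v = psize n zl.1 + zl.2 + 1 } C) ∧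
    (∀ n, m ≤ n → (m - 1) * (W - w + 2) - C ≤ n →
      IsGreatest { v : ℕ | ∃ zl ∈ ZX n (restr Xs n), v = psize n zl.1 + zl.2 + 1 }
        ((w - 1) * n + C)) := by
  obtain ⟨x₀, hx₀X, hx₀w⟩ := hw2
  have hx₀p := (hpart x₀ hx₀X).1
  have hwpos : 1 ≤ w := by
    obtain ⟨i, hi⟩ := hnz x₀ hx₀X
    have := hx₀p 0 i (Nat.zero_le i)
    omega
  set W1 := w - 1 with hW1def
  set Y : Set (ℕ → ℕ) := (fun x => fun i => x i - W1) '' Xs with hYdef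
  have hrX : ∀ n, m ≤ n → restr Xs n = Xs := by
    intro n hn
    ext x
    unfold restr
    simp only [Set.mem_setOf_eq]
    exact ⟨fun h => h.1, fun h => ⟨h, fun i hi => hm1 x h i (le_trans hn hi)⟩⟩
  have hrY : ∀ n, m ≤ n → restr Y n = Y := by
    intro n hn
    ext y
    unfold restr
    simp only [Set.mem_setOf_eq]
    refine ⟨fun h => h.1, fun h => ⟨h, ?_⟩⟩
    obtain ⟨x, hx, rfl⟩ := h
    intro i hi
    have := hm1 x hx i (le_trans hn hi)
    simp only []
    omega
  have hy0mem : (fun i => x₀ i - W1) ∈ Y := ⟨x₀, hx₀X, rfl⟩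
  have hy0le : ∀ i, x₀ i - W1 ≤ 1 := fun i => by
    have := hx₀p 0 i (Nat.zero_le i); omega
  -- key equivalence between conditions for (z, l) over Xs and (u, l) over Y
  have key : ∀ (z u : ℕ → ℕ), (∀ i, i < m → z i = u i + W1) → ∀ x ∈ Xs,
      ((trunc x (z 0) ≤ z ↔ trunc (fun i => x i - W1) (u 0) ≤ u) ∧
        conj x (z 0 + 1) = conj (fun i => x i - W1) (u 0 + 1)) := by
    intro z u hzu x hx
    have hz0 : z 0 = u 0 + W1 := hzu 0 hm0
    refine ⟨⟨?_, ?_⟩, ?_⟩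
    · intro h
      rw [Pi.le_def] at h ⊢
      intro i
      have hi := h i
      simp only [trunc] at hi ⊢
      by_cases him : i < m
      · have := hzu i him; omega
      · have := hm1 x hx i (le_of_not_gt him); omega
    · intro h
      rw [Pi.le_def] at h ⊢
      intro i
      have hi := h i
      simp only [trunc] at hi ⊢
      by_cases him : i < m
      · have := hzu i him; omega
      · have := hm1 x hx i (le_of_not_gt him); omega
    · unfold conj
      congr 1
      ext j
      simp only [Set.mem_setOf_eq]
      omega
  -- part 1 : the defining sets are all equal to the one for m
  have hset : ∀ n, m ≤ n →
      { v : ℕ | ∃ zl ∈ ZX n (restr Y n), v = psize n zl.1 + zl.2 + 1 } =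
      { v : ℕ | ∃ zl ∈ ZX m (restr Y m), v = psize m zl.1 + zl.2 + 1 } := by
    intro n hn
    ext v
    simp only [Set.mem_setOf_eq]
    constructor
    · rintro ⟨⟨u, l⟩, h, rfl⟩
      simp only [ZX, Set.mem_setOf_eq] at h
      obtain ⟨⟨hdec, hvan⟩, hex, hall⟩ := h
      rw [hrY n hn] at hex hall
      have hsupp : ∀ i, m ≤ i → u i = 0 := by
        rcases Nat.eq_zero_or_pos (u 0) with h0 | h0
        · intro i _
          have := hdec 0 i (Nat.zero_le i); omega
        · have hconj0 : conj (fun i => x₀ i - W1) (u 0 + 1) = 0 :=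
            conj_eq_zero' (fun j => by have := hy0le j; omega)
          have hnt : ¬ trunc (fun i => x₀ i - W1) (u 0) ≤ u := by
            intro hco
            have h2 := hall _ hy0mem hco (by rw [hconj0]; exact Nat.zero_le _)
            omega
          rw [Pi.le_def] at hnt
          push_neg at hnt
          obtain ⟨i₀, hi₀⟩ := hnt
          simp only [trunc] at hi₀
          have hx1 : 1 ≤ x₀ i₀ - W1 := by omega
          have hi₀m : i₀ < m := by
            by_contra hge
            have := hm1 x₀ hx₀X i₀ (le_of_not_gt hge)
            omega
          have hu0 : u i₀ = 0 := by have := hy0le i₀; omega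
          intro i hi
          have := hdec i₀ i (by omega)
          omega
      refine ⟨(u, l), ?_, by rw [psize_eq' hn hsupp]⟩
      simp only [ZX, Set.mem_setOf_eq]
      rw [hrY m le_rfl]
      exact ⟨⟨hdec, hsupp⟩, hex, hall⟩
    · rintro ⟨⟨u, l⟩, h, rfl⟩
      simp only [ZX, Set.mem_setOf_eq] at h
      obtain ⟨⟨hdec, hvan⟩, hex, hall⟩ := h
      rw [hrY m le_rfl] at hex hall
      refine ⟨(u, l), ?_, by rw [psize_eq' hn hvan]⟩
      simp only [ZX, Set.mem_setOf_eq]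
      rw [hrY n hn]
      exact ⟨⟨hdec, fun i hi => hvan i (le_trans hn hi)⟩, hex, hall⟩
  have part1 : ∀ n, m ≤ n →
      IsGreatest { v : ℕ | ∃ zl ∈ ZX n (restr Y n), v = psize n zl.1 + zl.2 + 1 } C := by
    intro n hn
    rw [hset n hn]
    exact hC
  refine ⟨part1, ?_⟩
  intro n hn hn2
  have hn0 : 0 < n := lt_of_lt_of_le hm0 hn
  have hWw : w ≤ W := by have := hW1 x₀ hx₀X; omega
  constructor
  · -- membership : the value (w-1) * n + C is attained
    obtain ⟨⟨u, l⟩, hzl, hval⟩ := hC.1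
    simp only [ZX, Set.mem_setOf_eq] at hzl
    obtain ⟨⟨hudec, huvan⟩, hex, hall⟩ := hzl
    rw [hrY m le_rfl] at hex hall
    have hzu : ∀ i, i < m → (if i < n then u i + W1 else 0) = u i + W1 := by
      intro i him
      rw [if_pos (lt_of_lt_of_le him hn)]
    have hkey := key (fun i => if i < n then u i + W1 else 0) u hzu
    refine ⟨((fun i => if i < n then u i + W1 else 0), l), ?_, ?_⟩
    · simp only [ZX, Set.mem_setOf_eq]
      rw [hrX n hn]
      refine ⟨⟨?_, ?_⟩, ?_, ?_⟩
      · intro i j hij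
        by_cases hjn : j < n
        · simp only [if_pos (lt_of_le_of_lt hij hjn), if_pos hjn]
          exact Nat.add_le_add_right (hudec i j hij) W1
        · simp only [if_neg hjn]
          exact Nat.zero_le _
      · intro i hi
        simp only [if_neg (by omega : ¬ i < n)]
      · obtain ⟨y, hyY, hyt, hyc⟩ := hex
        obtain ⟨x, hxX, rfl⟩ := hyY
        refine ⟨x, hxX, ?_, ?_⟩
        · exact (hkey x hxX).1.mpr hyt
        · rw [(hkey x hxX).2]; exact hyc
      · intro x hxX ht hc
        rw [(hkey x hxX).2]
        exact hall _ ⟨x, hxX, rfl⟩ ((hkey x hxX).1.mp ht) (by rw [← (hkey x hxX).2]; exact hc)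
    · -- the value computation
      have hps2 : psize n u = psize m u := psize_eq' hn huvan
      have hps : psize n (fun i => if i < n then u i + W1 else 0) = psize n u + n * W1 := by
        unfold psize
        rw [Finset.sum_congr rfl (fun i hi => if_pos (Finset.mem_range.1 hi)),
          Finset.sum_add_distrib, Finset.sum_const, Finset.card_range, smul_eq_mul]
      have hmc : n * W1 = W1 * n := Nat.mul_comm n W1
      have hval' : C = psize m u + l + 1 := hval
      simp only []
      omega
  · -- upper bound
    rintro v ⟨⟨z, l⟩, hzl, rfl⟩
    simp only [ZX, Set.mem_setOf_eq] at hzl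
    rw [hrX n hn] at hzl
    obtain ⟨⟨hdec, hvan⟩, ⟨x₁, hx₁, ht₁, hc₁⟩, hall⟩ := hzl
    have hx₁p := (hpart x₁ hx₁).1
    have hconj1 : conj x₁ (z 0 + 1) = l + 1 := hall x₁ hx₁ ht₁ hc₁
    have hlm : l + 1 ≤ m := by
      have := conj_le_of_supp_s19 (hm1 x₁ hx₁) (by omega : 1 ≤ z 0 + 1)
      omega
    have hzW : z 0 < W := by
      by_contra hge
      push_neg at hge
      have h0 : conj x₁ (z 0 + 1) = 0 := conj_eq_zero' (fun j => by
        have h1 := hx₁p 0 j (Nat.zero_le j)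
        have := hW1 x₁ hx₁
        omega)
      omega
    simp only []
    rcases le_or_gt W1 (z 0) with hc2 | hc1case
    · by_cases hcase : ∀ i, i < m → W1 ≤ z i
      · -- all of the first m parts are at least w - 1 : shift down
        have hzu : ∀ i, i < m → z i = (z i - W1) + W1 := fun i him => by
          have := hcase i him; omega
        have hkey := key z (fun i => z i - W1) hzu
        have hmem : (psize n (fun i => z i - W1) + l + 1) ∈
            { v : ℕ | ∃ zl ∈ ZX n (restr Y n), v = psize n zl.1 + zl.2 + 1 } := by
          refine ⟨((fun i => z i - W1), l), ?_, rfl⟩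
          simp only [ZX, Set.mem_setOf_eq]
          rw [hrY n hn]
          refine ⟨⟨fun i j h => Nat.sub_le_sub_right (hdec i j h) W1,
            fun i hi => by have := hvan i hi; show z i - W1 = 0; omega⟩, ?_, ?_⟩
          · exact ⟨_, ⟨x₁, hx₁, rfl⟩, (hkey x₁ hx₁).1.mp ht₁,
              by rw [← (hkey x₁ hx₁).2]; exact hc₁⟩
          · rintro y ⟨x, hxX, rfl⟩ ht hc
            rw [← (hkey x hxX).2]
            exact hall x hxX ((hkey x hxX).1.mpr ht) (by rw [(hkey x hxX).2]; exact hc)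
        have hCle := (part1 n hn).2 hmem
        have hzle : psize n z ≤ psize n (fun i => z i - W1) + W1 * n := by
          unfold psize
          calc ∑ i ∈ Finset.range n, z i ≤ ∑ i ∈ Finset.range n, (z i - W1 + W1) :=
            Finset.sum_le_sum (fun i _ => by omega)
          _ = (∑ i ∈ Finset.range n, (z i - W1)) + W1 * n := by
            rw [Finset.sum_add_distrib, Finset.sum_const, Finset.card_range, smul_eq_mul,
              Nat.mul_comm]
        omega
      · -- some part among the first m is small
        push_neg at hcase
        obtain ⟨i₀, hi₀m, hi₀⟩ := hcase
        have hw2' : 2 ≤ w := by omega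
        have hex0 : ∃ i, z i < W1 := ⟨i₀, hi₀⟩
        have hjspec : z (Nat.find hex0) < W1 := Nat.find_spec hex0
        have hjm : Nat.find hex0 ≤ i₀ := Nat.find_min' hex0 hi₀
        set j := Nat.find hex0 with hjdef
        have hx₁l : z 0 + 1 ≤ x₁ l := conj_ge' hx₁p hconj1
        have hzl : z 0 ≤ z l := by
          have := Pi.le_def.mp ht₁ l
          simp only [trunc] at this
          omega
        have hlj : l + 1 ≤ j := by
          by_contra hh
          push_neg at hh
          have := hdec j l (by omega)
          omega
        have hsplit : psize n z =
            ∑ i ∈ Finset.range j, z i + ∑ i ∈ Finset.Ico j n, z i := by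
          unfold psize
          rw [Finset.sum_range_add_sum_Ico _ (by omega : j ≤ n)]
        have hb1 : ∑ i ∈ Finset.range j, z i ≤ j * z 0 := by
          calc ∑ i ∈ Finset.range j, z i ≤ ∑ _i ∈ Finset.range j, z 0 :=
            Finset.sum_le_sum (fun i _ => hdec 0 i (Nat.zero_le i))
          _ = j * z 0 := by rw [Finset.sum_const, Finset.card_range, smul_eq_mul]
        have hb2 : ∑ i ∈ Finset.Ico j n, z i ≤ (n - j) * (w - 2) := by
          calc ∑ i ∈ Finset.Ico j n, z i ≤ ∑ _i ∈ Finset.Ico j n, (w - 2) :=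
            Finset.sum_le_sum (fun i hi => by
              have hji := (Finset.mem_Ico.1 hi).1
              have := hdec j i hji
              omega)
          _ = (n - j) * (w - 2) := by rw [Finset.sum_const, Nat.card_Ico, smul_eq_mul]
        have hn2' : (m - 1) * (W - w + 2) ≤ n + C := by omega
        have e1 : j * z 0 + j ≤ j * W := by
          calc j * z 0 + j = j * (z 0 + 1) := by rw [Nat.mul_add, Nat.mul_one]
          _ ≤ j * W := Nat.mul_le_mul le_rfl (by omega)
        have e2 : j * W = j * (w - 2) + j * (W - w + 2) := by
          rw [← Nat.mul_add]
          congr 1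
          omega
        have e3 : j * (W - w + 2) ≤ (m - 1) * (W - w + 2) :=
          Nat.mul_le_mul (by omega) le_rfl
        have e4 : j * (w - 2) + (n - j) * (w - 2) = n * (w - 2) := by
          rw [← Nat.add_mul]
          congr 1
          omega
        have e5 : n * W1 = n * (w - 2) + n := by
          have h : W1 = (w - 2) + 1 := by omega
          rw [h, Nat.mul_add, Nat.mul_one]
        have e6 : n * W1 = W1 * n := Nat.mul_comm n W1
        omega
    · -- z 0 < w - 1
      have hw2' : 2 ≤ w := by omega
      have hble : psize n z ≤ n * (w - 2) := by
        unfold psize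
        calc ∑ i ∈ Finset.range n, z i ≤ ∑ _i ∈ Finset.range n, (w - 2) :=
          Finset.sum_le_sum (fun i _ => by have := hdec 0 i (Nat.zero_le i); omega)
        _ = n * (w - 2) := by rw [Finset.sum_const, Finset.card_range, smul_eq_mul]
      have e5 : n * W1 = n * (w - 2) + n := by
        have h : W1 = (w - 2) + 1 := by omega
        rw [h, Nat.mul_add, Nat.mul_one]
      have e6 : n * W1 = W1 * n := Nat.mul_comm n W1
      omega
end
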